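/- arXiv:1510.02122 — 7 statements merged into one kernel-verified Lean document; each statement's English description precedes it below -/
import Mathlib

section
/- Let f be a symmetric bounded affine permutation of type (n,2n). Then for every i ∈ [2n], R(I_i(f)) = I_{i'+1}(f), where i' = 2n+1−i, the subscript i'+1 is taken modulo 2n (with representative in [2n]), and I_a(f) denotes the a-anti-exceedance set of f. -/
/-- `R(I) = [2n] \ {2n+1-i : i ∈ I}` for subsets of `[2n] = {1,…,2n}`. -/
noncomputable def Rset (n : ℕ) (I : Finset ℤ) : Finset ℤ :=
  (Finset.Icc (1 : ℤ) (2 * (n : ℤ))) \ (I.image fun x => 2 * (n : ℤ) + 1 - x)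

/-- A bounded affine permutation of type `(k,n)`. -/
def IsBAP (n k : ℕ) (f : ℤ → ℤ) : Prop :=
  Function.Bijective f ∧
  (∀ i : ℤ, f (i + (n : ℤ)) = f i + (n : ℤ)) ∧
  (∀ i : ℤ, i ≤ f i ∧ f i ≤ i + (n : ℤ)) ∧
  (∑ i ∈ Finset.Icc (1 : ℤ) (n : ℤ), (f i - i)) = (k : ℤ) * (n : ℤ)

/-- A bounded affine permutation of type `(n,2n)` is symmetric if
`f(2n+1-a) = 4n+1-f(a)` for all integers `a`. -/
def IsSymmBAP (n : ℕ) (f : ℤ → ℤ) : Prop :=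
  ∀ a : ℤ, f (2 * (n : ℤ) + 1 - a) = 4 * (n : ℤ) + 1 - f a

/-- `f̄(i)`: the representative in `[1,n]` of `f(i)` modulo `n`. -/
def fbar (n : ℕ) (f : ℤ → ℤ) (i : ℤ) : ℤ := (f i - 1) % (n : ℤ) + 1

open scoped Classical in
/-- The `a`-anti-exceedance set `I_a(f) = {i ∈ [n] : f̄⁻¹(i) >_a i or f(i) = i+n}`,
where `x ≤_a y ↔ (x-a) mod n ≤ (y-a) mod n` is the cyclic shift of the order on `[1,n]`. -/
noncomputable def antiExc (n : ℕ) (f : ℤ → ℤ) (a : ℤ) : Finset ℤ :=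
  (Finset.Icc (1 : ℤ) (n : ℤ)).filter fun i =>
    f i = i + (n : ℤ) ∨
      ∃ j ∈ Finset.Icc (1 : ℤ) (n : ℤ),
        fbar n f j = i ∧ (i - a) % (n : ℤ) < (j - a) % (n : ℤ)

/-- A Grassmann necklace of type `(k,n)`, encoded as an `n`-periodic family of
`k`-subsets of `[1,n]` indexed by `ℤ`. -/
def IsGN (n k : ℕ) (I : ℤ → Finset ℤ) : Prop :=
  (∀ i : ℤ, I (i + (n : ℤ)) = I i) ∧
  ∀ i ∈ Finset.Icc (1 : ℤ) (n : ℤ),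
    I i ⊆ Finset.Icc (1 : ℤ) (n : ℤ) ∧ (I i).card = k ∧
    (i ∈ I i → ∃ j ∈ Finset.Icc (1 : ℤ) (n : ℤ), I (i + 1) = insert j ((I i).erase i)) ∧
    (i ∉ I i → I (i + 1) = I i)

/-- `f` is the bounded affine permutation associated to the Grassmann necklace `I`:
`f̄(i) = j` if `I_{i+1} = (I_i ∖ {i}) ∪ {j}` with `j ≠ i`; `f(i) = i` if `I_{i+1} = I_i`
and `i ∉ I_i`; `f(i) = i+n` if `I_{i+1} = I_i` and `i ∈ I_i`. -/
def GNAssoc (n : ℕ) (I : ℤ → Finset ℤ) (f : ℤ → ℤ) : Prop :=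
  ∀ i ∈ Finset.Icc (1 : ℤ) (n : ℤ),
    (I (i + 1) = I i → i ∉ I i → f i = i) ∧
    (I (i + 1) = I i → i ∈ I i → f i = i + (n : ℤ)) ∧
    (I (i + 1) ≠ I i → fbar n f i ≠ i ∧ I (i + 1) = insert (fbar n f i) ((I i).erase i))

/-- A dual Grassmann necklace of type `(k,n)`, encoded as an `n`-periodic family of
`k`-subsets of `[1,n]` indexed by `ℤ`. -/
def IsDGN (n k : ℕ) (J : ℤ → Finset ℤ) : Prop :=
  (∀ i : ℤ, J (i + (n : ℤ)) = J i) ∧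
  ∀ i ∈ Finset.Icc (1 : ℤ) (n : ℤ),
    J i ⊆ Finset.Icc (1 : ℤ) (n : ℤ) ∧ (J i).card = k ∧
    (i ∈ J (i + 1) → ∃ j ∈ Finset.Icc (1 : ℤ) (n : ℤ), J i = insert j ((J (i + 1)).erase i)) ∧
    (i ∉ J (i + 1) → J i = J (i + 1))

/-- `f` is the bounded affine permutation associated to the dual Grassmann necklace `J`:
`f̄⁻¹(i) = j` if `J_i = (J_{i+1} ∖ {i}) ∪ {j}` with `j ≠ i`; `f(i) = i` if `J_i = J_{i+1}`
and `i ∉ J_{i+1}`; `f(i) = i+n` if `J_i = J_{i+1}` and `i ∈ J_{i+1}`. -/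
def DGNAssoc (n : ℕ) (J : ℤ → Finset ℤ) (f : ℤ → ℤ) : Prop :=
  ∀ i ∈ Finset.Icc (1 : ℤ) (n : ℤ),
    (J i = J (i + 1) → i ∉ J (i + 1) → f i = i) ∧
    (J i = J (i + 1) → i ∈ J (i + 1) → f i = i + (n : ℤ)) ∧
    (J i ≠ J (i + 1) →
      ∃ j ∈ Finset.Icc (1 : ℤ) (n : ℤ),
        j ≠ i ∧ fbar n f j = i ∧ J i = insert j ((J (i + 1)).erase i))

/-- The minor `Δ_I`: determinant of the `k×k` matrix whose columns are the columns `v i`,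
`i ∈ I`, in increasing order (and `0` if `I` does not have exactly `k` elements). -/
noncomputable def Delta {k : ℕ} (v : ℤ → Fin k → ℝ) (I : Finset ℤ) : ℝ :=
  if h : I.card = k then
    Matrix.det (Matrix.of fun r c : Fin k => v (I.orderIsoOfFin h c).1 r)
  else 0

/-- The `k×n` matrix with columns `v 1, …, v n` is totally nonnegative:
it has (full) rank `k` and all maximal minors are nonnegative. -/
def IsTNN (n k : ℕ) (v : ℤ → Fin k → ℝ) : Prop :=
  Submodule.span ℝ (v '' Set.Icc (1 : ℤ) (n : ℤ)) = ⊤ ∧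
  ∀ I ⊆ Finset.Icc (1 : ℤ) (n : ℤ), I.card = k → 0 ≤ Delta v I

/-- `f` is the span-permutation of the periodically extended column family `v`:
`f(i) = min {r ≥ i : v i ∈ span (v (i+1), …, v r)}` (the empty span being `{0}`). -/
def IsSpanPerm {k : ℕ} (v : ℤ → Fin k → ℝ) (f : ℤ → ℤ) : Prop :=
  ∀ i : ℤ, i ≤ f i ∧ v i ∈ Submodule.span ℝ (v '' Set.Ioc i (f i)) ∧
    ∀ r : ℤ, i ≤ r → v i ∈ Submodule.span ℝ (v '' Set.Ioc i r) → f i ≤ r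

/-- `g(i) = max {r ≤ i : v i ∈ span (v r, …, v (i-1))}` (the empty span being `{0}`). -/
def IsRevSpanPerm {k : ℕ} (v : ℤ → Fin k → ℝ) (g : ℤ → ℤ) : Prop :=
  ∀ i : ℤ, g i ≤ i ∧ v i ∈ Submodule.span ℝ (v '' Set.Ico (g i) i) ∧
    ∀ r : ℤ, r ≤ i → v i ∈ Submodule.span ℝ (v '' Set.Ico r i) → r ≤ g i

/-- The matroid `𝓜(M) = {I : Δ_I(M) ≠ 0}` of the `k×n` matrix with columns `v 1, …, v n`. -/
def Mat (n k : ℕ) (v : ℤ → Fin k → ℝ) : Set (Finset ℤ) :=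
  {I | I ⊆ Finset.Icc (1 : ℤ) (n : ℤ) ∧ I.card = k ∧ Delta v I ≠ 0}

/-- `I ≤_a J` for subsets of `[1,n]`: elementwise comparison, after sorting each set in
`≤_a`-increasing order, in the cyclically shifted order `x ≤_a y ↔ (x-a) mod n ≤ (y-a) mod n`. -/
def cycLE (n : ℕ) (a : ℤ) (I J : Finset ℤ) : Prop :=
  List.Forall₂ (· ≤ ·)
    ((I.image fun x => (x - a) % (n : ℤ)).sort (· ≤ ·))
    ((J.image fun x => (x - a) % (n : ℤ)).sort (· ≤ ·))

/-- `Ia` is the `≤_a`-minimal element of the matroid of `v` (i.e. `Ia = I_a(M)`). -/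
def IsCycMin (n k : ℕ) (v : ℤ → Fin k → ℝ) (a : ℤ) (Ia : Finset ℤ) : Prop :=
  Ia ∈ Mat n k v ∧ ∀ J ∈ Mat n k v, cycLE n a Ia J

/-- The columns of `M · xᵢ(c)`, extended `n`-periodically: column `j` with `j ≡ i+1 (mod n)`
becomes `v j + c • v (j-1)`; all other columns are unchanged. -/
def bridgeCol (n : ℕ) (i : ℤ) (c : ℝ) {k : ℕ} (v : ℤ → Fin k → ℝ) : ℤ → Fin k → ℝ :=
  fun j => if (j - (i + 1)) % (n : ℤ) = 0 then v j + c • v (j - 1) else v j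

/-- The `n×2n` matrix with columns `v 1, …, v (2n)` is Plücker-symmetric:
`Δ_{R(I)} = Δ_I` for every `n`-element subset `I ⊆ [2n]`. -/
def PSym (n : ℕ) (v : ℤ → Fin n → ℝ) : Prop :=
  ∀ I ⊆ Finset.Icc (1 : ℤ) (2 * (n : ℤ)), I.card = n → Delta v (Rset n I) = Delta v I

/-- The affine simple transposition `sᵢ` modulo `n`: swaps `j ↔ j+1` for every `j ≡ i (mod n)`
and fixes all other integers. -/
def affS (n : ℕ) (i : ℤ) (j : ℤ) : ℤ :=
  if (j - i) % (n : ℤ) = 0 then j + 1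
  else if (j - (i + 1)) % (n : ℤ) = 0 then j - 1
  else j

private lemma emod_neg_one_sub (M a : ℤ) (hM : 0 < M) : (-1 - a) % M = M - 1 - a % M := by
  have h0 : 0 ≤ a % M := Int.emod_nonneg a hM.ne'
  have h1 : a % M < M := Int.emod_lt_of_pos a hM
  have hd := Int.mul_ediv_add_emod a M
  calc (-1 - a) % M = ((M - 1 - a % M) + M * (-(a / M) - 1)) % M := by congr 1; linarith
    _ = (M - 1 - a % M) % M := Int.add_mul_emod_self_left ..
    _ = M - 1 - a % M := Int.emod_eq_of_lt (by omega) (by omega)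

private lemma symBAP_core (M : ℤ) (hM0 : 0 < M) (f : ℤ → ℤ)
    (hinj : Function.Injective f)
    (hsurj : Function.Surjective f)
    (hper : ∀ x : ℤ, f (x + M) = f x + M)
    (hbd : ∀ x : ℤ, x ≤ f x ∧ f x ≤ x + M)
    (hsym : ∀ a : ℤ, f (M + 1 - a) = 2 * M + 1 - f a)
    (i m : ℤ) (hm1 : 1 ≤ m) (hm2 : m ≤ M) :
    ((f m = m + M ∨ ∃ j, (1 ≤ j ∧ j ≤ M) ∧ (f j - 1) % M + 1 = m ∧
        (m - (M + 2 - i)) % M < (j - (M + 2 - i)) % M)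
      ↔ ¬ (f (M + 1 - m) = M + 1 - m + M ∨ ∃ j, (1 ≤ j ∧ j ≤ M) ∧
        (f j - 1) % M + 1 = M + 1 - m ∧ (M + 1 - m - i) % M < (j - i) % M)) := by
  have hperZ : ∀ x c : ℤ, f (x + M * c) = f x + M * c := by
    intro x c
    induction c using Int.induction_on with
    | zero => simp
    | succ k ih =>
        have h := hper (x + M * k)
        have e : x + M * ((k : ℤ) + 1) = x + M * k + M := by ring
        rw [e, h, ih]; ring
    | pred k ih =>
        have h := hper (x + M * (-(k : ℤ) - 1))
        have e : x + M * (-(k : ℤ) - 1) + M = x + M * (-(k : ℤ)) := by ring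
        rw [e, ih] at h
        have : f (x + M * (-(k : ℤ) - 1)) = f x + M * (-(k : ℤ)) - M := by linarith
        rw [this]; ring
  -- small multiple lemma
  have hsmall : ∀ d : ℤ, M ∣ d → -M < d → d < M → d = 0 := by
    intro d hdvd h1 h2
    obtain ⟨c, rfl⟩ := hdvd
    rcases lt_trichotomy c 0 with h | h | h
    · exfalso
      have : M * c ≤ M * (-1) := mul_le_mul_of_nonneg_left (by omega) hM0.le
      linarith
    · rw [h]; ring
    · exfalso
      have : M * 1 ≤ M * c := mul_le_mul_of_nonneg_left (by omega) hM0.le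
      linarith
  have hdvdF : ∀ j k : ℤ, (f j - 1) % M + 1 = (f k - 1) % M + 1 → M ∣ (f j - f k) := by
    intro j k h
    have h' : (f j - 1) % M = (f k - 1) % M := by omega
    have := Int.dvd_of_emod_eq_zero (Int.emod_eq_emod_iff_emod_sub_eq_zero.mp h')
    simpa [show f j - 1 - (f k - 1) = f j - f k by ring] using this
  have hFinj : ∀ j k : ℤ, 1 ≤ j → j ≤ M → 1 ≤ k → k ≤ M →
      (f j - 1) % M + 1 = (f k - 1) % M + 1 → j = k := by
    intro j k hj1 hj2 hk1 hk2 h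
    obtain ⟨c, hc⟩ := hdvdF j k h
    have h1 : f (k + M * c) = f j := by rw [hperZ]; linarith
    have h2 : k + M * c = j := hinj h1
    have hc0 : M * c = 0 := by
      have := hsmall (M * c) ⟨c, rfl⟩ (by linarith) (by linarith)
      linarith [this]
    linarith
  have hFsurj : ∀ x : ℤ, 1 ≤ x → x ≤ M → ∃ j, (1 ≤ j ∧ j ≤ M) ∧ (f j - 1) % M + 1 = x := by
    intro x hx1 hx2
    obtain ⟨y, hy⟩ := hsurj x
    have hd := Int.mul_ediv_add_emod (y - 1) M
    have hr0 : 0 ≤ (y - 1) % M := Int.emod_nonneg _ hM0.ne'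
    have hr1 : (y - 1) % M < M := Int.emod_lt_of_pos _ hM0
    refine ⟨(y - 1) % M + 1, ⟨by omega, by omega⟩, ?_⟩
    have e : (y - 1) % M + 1 = y + M * (-((y - 1) / M)) := by linarith
    rw [e, hperZ, hy]
    have e2 : x + M * (-((y - 1) / M)) - 1 = (x - 1) + M * (-((y - 1) / M)) := by ring
    rw [e2, Int.add_mul_emod_self_left, Int.emod_eq_of_lt (by omega) (by omega)]
    omega
  have hFsym : ∀ x : ℤ, (f (M + 1 - x) - 1) % M + 1 = M + 1 - ((f x - 1) % M + 1) := by
    intro x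
    rw [hsym x]
    have e : 2 * M + 1 - f x - 1 = (-1 - (f x - 1)) + M * 2 := by ring
    rw [e, Int.add_mul_emod_self_left .., emod_neg_one_sub M (f x - 1) hM0]
    ring
  have hFfix : ∀ x : ℤ, 1 ≤ x → x ≤ M → (f x - 1) % M + 1 = x → f x = x ∨ f x = x + M := by
    intro x h1 h2 hx
    have hxm : (x - 1) % M = x - 1 := Int.emod_eq_of_lt (by omega) (by omega)
    have h' : (f x - 1) % M = (x - 1) % M := by omega
    have hdvd : M ∣ (f x - x) := by
      have := Int.dvd_of_emod_eq_zero (Int.emod_eq_emod_iff_emod_sub_eq_zero.mp h')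
      simpa [show f x - 1 - (x - 1) = f x - x by ring] using this
    obtain ⟨c, hc⟩ := hdvd
    have hb1 := (hbd x).1
    have hb2 := (hbd x).2
    have hc01 : M * c = 0 ∨ M * c = M := by
      rcases lt_trichotomy c 0 with h | h | h
      · exfalso
        have : M * c ≤ M * (-1) := mul_le_mul_of_nonneg_left (by omega) hM0.le
        linarith
      · left; rw [h]; ring
      · rcases lt_trichotomy c 1 with h' | h' | h'
        · omega
        · right; rw [h']; ring
        · exfalso
          have : M * 2 ≤ M * c := mul_le_mul_of_nonneg_left (by omega) hM0.le
          linarith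
    rcases hc01 with h | h
    · left; linarith
    · right; linarith
  have hFfix' : ∀ x : ℤ, 1 ≤ x → x ≤ M → (f x = x ∨ f x = x + M) → (f x - 1) % M + 1 = x := by
    intro x h1 h2 hx
    rcases hx with h | h <;> rw [h]
    · rw [Int.emod_eq_of_lt (by omega) (by omega)]; ring
    · have e : x + M - 1 = (x - 1) + M * 1 := by ring
      rw [e, Int.add_mul_emod_self_left .., Int.emod_eq_of_lt (by omega) (by omega)]
      ring
  have hs := hsym m
  have hTop : f m = m + M ↔ f (M + 1 - m) = M + 1 - m := by constructor <;> intro h <;> omega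
  have hFix : f m = m ↔ f (M + 1 - m) = (M + 1 - m) + M := by constructor <;> intro h <;> omega
  obtain ⟨j, ⟨hj1, hj2⟩, hjF⟩ := hFsurj m hm1 hm2
  have hj'F : (f (M + 1 - j) - 1) % M + 1 = M + 1 - m := by rw [hFsym j, hjF]
  by_cases hA : f m = m + M
  · have hfm' : f (M + 1 - m) = M + 1 - m := hTop.mp hA
    have hFm' : (f (M + 1 - m) - 1) % M + 1 = M + 1 - m :=
      hFfix' _ (by omega) (by omega) (Or.inl hfm')
    constructor
    · rintro - (h | ⟨k, ⟨hk1, hk2⟩, hkF, hklt⟩)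
      · omega
      · have : k = M + 1 - m := hFinj k (M + 1 - m) hk1 hk2 (by omega) (by omega)
          (by rw [hkF, hFm'])
        subst this
        omega
    · intro _; left; exact hA
  · by_cases hB : f m = m
    · have hfm' : f (M + 1 - m) = (M + 1 - m) + M := hFix.mp hB
      have hFm : (f m - 1) % M + 1 = m := hFfix' _ hm1 hm2 (Or.inl hB)
      constructor
      · rintro (h | ⟨k, ⟨hk1, hk2⟩, hkF, hklt⟩)
        · omega
        · exfalso
          have : k = m := hFinj k m hk1 hk2 hm1 hm2 (by rw [hkF, hFm])
          subst this
          omega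
      · intro hnR
        exact absurd (Or.inl hfm') hnR
    · -- generic case
      have hA' : f (M + 1 - m) ≠ (M + 1 - m) + M := fun h => hB (hFix.mpr h)
      have hB' : f (M + 1 - m) ≠ M + 1 - m := fun h => hA (hTop.mpr h)
      have hjne : j ≠ m := by
        intro h
        subst h
        rcases hFfix j hj1 hj2 hjF with h | h
        · exact hB h
        · exact hA h
      have key : ∀ x : ℤ, (M + 1 - x - i) % M = M - 1 - (x - (M + 2 - i)) % M := by
        intro x
        have e : M + 1 - x - i = -1 - (x - (M + 2 - i)) := by ring
        rw [e, emod_neg_one_sub _ _ hM0]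
      have hne : (m - (M + 2 - i)) % M ≠ (j - (M + 2 - i)) % M := by
        intro h
        have hdvd : M ∣ (m - j) := by
          have := Int.dvd_of_emod_eq_zero (Int.emod_eq_emod_iff_emod_sub_eq_zero.mp h)
          simpa [show m - (M + 2 - i) - (j - (M + 2 - i)) = m - j by ring] using this
        have := hsmall (m - j) hdvd (by omega) (by omega)
        omega
      constructor
      · rintro (h | ⟨k, ⟨hk1, hk2⟩, hkF, hklt⟩)
        · exact absurd h hA
        · have : k = j := hFinj k j hk1 hk2 hj1 hj2 (by rw [hkF, hjF])
          subst this
          rintro (h' | ⟨k', ⟨hk'1, hk'2⟩, hk'F, hk'lt⟩)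
          · exact hA' h'
          · have : k' = M + 1 - k := hFinj k' (M + 1 - k) hk'1 hk'2 (by omega) (by omega)
              (by rw [hk'F, hj'F])
            subst this
            rw [key m, key k] at hk'lt
            omega
      · intro hnR
        right
        refine ⟨j, ⟨hj1, hj2⟩, hjF, ?_⟩
        by_contra hlt
        apply hnR
        right
        refine ⟨M + 1 - j, ⟨by omega, by omega⟩, hj'F, ?_⟩
        rw [key m, key j]
        omega

/-- For a symmetric bounded affine permutation `f` of type `(n,2n)`,
`R(I_i(f)) = I_{i'+1}(f)` for every `i ∈ [2n]`, where `i' = 2n+1-i`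
(so `i'+1 = 2n+2-i`, indices modulo `2n`). -/
theorem symmetric_BAP_antiExceedance_necklace (n : ℕ) (f : ℤ → ℤ)
    (hf : IsBAP (2 * n) n f) (hsym : IsSymmBAP n f) :
    ∀ i ∈ Finset.Icc (1 : ℤ) (2 * (n : ℤ)),
      Rset n (antiExc (2 * n) f i) = antiExc (2 * n) f (2 * (n : ℤ) + 2 - i) := by
  intro i hi
  simp only [Finset.mem_Icc] at hi
  have hM0 : 0 < 2 * (n : ℤ) := by omega
  have hcast : ((2 * n : ℕ) : ℤ) = 2 * (n : ℤ) := by push_cast; ring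
  obtain ⟨⟨hfinj, hfsurj⟩, hper, hbd, -⟩ := hf
  have hper' : ∀ x : ℤ, f (x + 2 * (n : ℤ)) = f x + 2 * (n : ℤ) := by
    intro x; have := hper x; rwa [hcast] at this
  have hbd' : ∀ x : ℤ, x ≤ f x ∧ f x ≤ x + 2 * (n : ℤ) := by
    intro x; have := hbd x; rwa [hcast] at this
  have hsym' : ∀ a : ℤ, f (2 * (n : ℤ) + 1 - a) = 2 * (2 * (n : ℤ)) + 1 - f a := by
    intro a; rw [hsym a]; ring
  ext m
  simp only [Rset, antiExc, Finset.mem_sdiff, Finset.mem_image, Finset.mem_filter]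
  simp only [Rset, antiExc, fbar, hcast, Finset.mem_sdiff, Finset.mem_filter,
    Finset.mem_image, Finset.mem_Icc, not_exists, not_and]
  have key := symBAP_core (2 * (n : ℤ)) hM0 f hfinj hfsurj hper' hbd' hsym' i m
  constructor
  · rintro ⟨⟨h1, h2⟩, hno⟩
    refine ⟨⟨h1, h2⟩, ((key h1 h2).mpr ?_)⟩
    intro hP
    exact (hno (2 * (n : ℤ) + 1 - m) ⟨⟨by omega, by omega⟩, hP⟩) (by ring)
  · rintro ⟨⟨h1, h2⟩, hP⟩
    refine ⟨⟨h1, h2⟩, ?_⟩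
    rintro x ⟨⟨hx1, hx2⟩, hPx⟩ hxm
    have hx' : x = 2 * (n : ℤ) + 1 - m := by omega
    subst hx'
    exact (key h1 h2).mp hP hPx
end

section
/- Let (I_1,…,I_{2n}) be a Grassmann necklace of type (n,2n) and let f be its associated bounded affine permutation. If R(I_i) = I_{i'+1} for all i ∈ [2n], where i' = 2n+1−i and indices are taken modulo 2n, then f is symmetric, i.e., f(2n+1−a) = 4n+1−f(a) for all a ∈ ℤ. -/
lemma my_mem_Rset (n : ℕ) (J : Finset ℤ) (x : ℤ) :
    x ∈ Rset n J ↔ x ∈ Finset.Icc (1 : ℤ) (2 * (n : ℤ)) ∧ (2 * (n : ℤ) + 1 - x) ∉ J := by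
  simp only [Rset, Finset.mem_sdiff, Finset.mem_image]
  constructor
  · rintro ⟨h1, h2⟩
    refine ⟨h1, fun hx => h2 ⟨_, hx, by ring⟩⟩
  · rintro ⟨h1, h2⟩
    refine ⟨h1, ?_⟩
    rintro ⟨y, hy, rfl⟩
    have hyy : 2 * (n : ℤ) + 1 - (2 * (n : ℤ) + 1 - y) = y := by ring
    rw [hyy] at h2
    exact h2 hy

lemma my_bap_val (n : ℕ) (hn : 0 < n) (F a j : ℤ)
    (ha1 : 1 ≤ a) (ha2 : a ≤ 2 * n) (hj1 : 1 ≤ j) (hj2 : j ≤ 2 * n)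
    (hb1 : a ≤ F) (hb2 : F ≤ a + 2 * n)
    (hfb : (F - 1) % (2 * (n : ℤ)) = j - 1) :
    F = j ∨ F = j + 2 * n := by
  have hn' : (1 : ℤ) ≤ n := by exact_mod_cast hn
  have hpos : (0 : ℤ) < 2 * n := by linarith
  have hdef : (F - 1) % (2 * (n : ℤ)) = (F - 1) - 2 * (n : ℤ) * ((F - 1) / (2 * (n : ℤ))) :=
    Int.emod_def _ _
  set k := (F - 1) / (2 * (n : ℤ)) with hk
  have hFk : F - j = 2 * (n : ℤ) * k := by linarith
  have hk0 : -1 < k := by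
    have h1 : 2 * (n : ℤ) * (-1) < 2 * (n : ℤ) * k := by linarith
    exact lt_of_mul_lt_mul_left h1 (le_of_lt hpos)
  have hk2 : k < 2 := by
    have h1 : 2 * (n : ℤ) * k < 2 * (n : ℤ) * 2 := by linarith
    exact lt_of_mul_lt_mul_left h1 (le_of_lt hpos)
  have hk01 : k = 0 ∨ k = 1 := by omega
  rcases hk01 with h | h
  · left; rw [h] at hFk; linarith
  · right; rw [h] at hFk; linarith

/-- If a Grassmann necklace of type `(n,2n)` satisfies `R(I_i) = I_{i'+1}`
for all `i ∈ [2n]` (with `i' = 2n+1-i`, indices mod `2n`), then its associated bounded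
affine permutation is symmetric. -/
theorem necklace_symmetry_implies_BAP_symmetric (n : ℕ) (I : ℤ → Finset ℤ)
    (hI : IsGN (2 * n) n I) (f : ℤ → ℤ) (hf : IsBAP (2 * n) n f)
    (hassoc : GNAssoc (2 * n) I f)
    (hsymN : ∀ i ∈ Finset.Icc (1 : ℤ) (2 * (n : ℤ)),
      Rset n (I i) = I (2 * (n : ℤ) + 2 - i)) :
    IsSymmBAP n f := by
  rcases Nat.eq_zero_or_pos n with rfl | hn
  · -- n = 0 : f is the identity
    have hx : ∀ x : ℤ, f x = x := by
      intro x
      have h := hf.2.2.1 x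
      push_cast at h
      omega
    intro a
    rw [hx, hx]
    push_cast
    ring
  · have hn' : (1 : ℤ) ≤ n := by exact_mod_cast hn
    have hpos : (0 : ℤ) < 2 * n := by linarith
    have hN : ((2 * n : ℕ) : ℤ) = 2 * (n : ℤ) := by push_cast; ring
    have hmemIcc : ∀ x : ℤ, x ∈ Finset.Icc (1 : ℤ) ((2 * n : ℕ) : ℤ) ↔ 1 ≤ x ∧ x ≤ 2 * (n : ℤ) := by
      intro x; rw [Finset.mem_Icc, hN]
    -- periodicity of I: I (1 + 2n) = I 1
    have hIper1 : I (2 * (n : ℤ) + 1) = I 1 := by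
      have h := hI.1 1
      rw [hN] at h
      rw [show (2 * (n : ℤ) + 1) = 1 + 2 * (n : ℤ) by ring]
      exact h
    -- the symmetry relations
    have hB : ∀ b : ℤ, 1 ≤ b → b ≤ 2 * (n : ℤ) → I (2 * (n : ℤ) + 2 - b) = Rset n (I b) := by
      intro b h1 h2
      exact (hsymN b (Finset.mem_Icc.mpr ⟨h1, h2⟩)).symm
    have hA : ∀ b : ℤ, 1 ≤ b → b ≤ 2 * (n : ℤ) → I (2 * (n : ℤ) + 1 - b) = Rset n (I (b + 1)) := by
      intro b h1 h2
      by_cases hb : b = 2 * (n : ℤ)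
      · subst hb
        have e2 : I (2 * (n : ℤ) + 1 - 2 * (n : ℤ)) = I 1 := by norm_num
        have e3 := hsymN 1 (Finset.mem_Icc.mpr ⟨le_refl _, by linarith⟩)
        rw [show (2 * (n : ℤ) + 2 - 1) = 2 * (n : ℤ) + 1 by ring, hIper1] at e3
        rw [hIper1, e2, e3]
      · have h3 : b + 1 ≤ 2 * (n : ℤ) := by omega
        have e := hsymN (b + 1) (Finset.mem_Icc.mpr ⟨by linarith, h3⟩)
        rw [show (2 * (n : ℤ) + 2 - (b + 1)) = 2 * (n : ℤ) + 1 - b by ring] at e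
        exact e.symm
    -- card of I (b+1)
    have hcard1 : ∀ b : ℤ, 1 ≤ b → b ≤ 2 * (n : ℤ) → (I (b + 1)).card = n := by
      intro b h1 h2
      by_cases hb : b = 2 * (n : ℤ)
      · subst hb
        rw [show (2 * (n : ℤ) + 1 : ℤ) = 2 * (n : ℤ) + 1 by ring, hIper1]
        exact (hI.2 1 ((hmemIcc 1).mpr ⟨le_refl _, by linarith⟩)).2.1
      · exact (hI.2 (b + 1) ((hmemIcc _).mpr ⟨by linarith, by omega⟩)).2.1
    -- the key lemma, for b in the fundamental window
    have key : ∀ b : ℤ, 1 ≤ b → b ≤ 2 * (n : ℤ) →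
        f (2 * (n : ℤ) + 1 - b) = 4 * (n : ℤ) + 1 - f b := by
      intro b hb1 hb2
      have hbI : b ∈ Finset.Icc (1 : ℤ) ((2 * n : ℕ) : ℤ) := (hmemIcc b).mpr ⟨hb1, hb2⟩
      have hb'1 : (1 : ℤ) ≤ 2 * (n : ℤ) + 1 - b := by linarith
      have hb'2 : (2 * (n : ℤ) + 1 - b : ℤ) ≤ 2 * (n : ℤ) := by linarith
      have hb'I : (2 * (n : ℤ) + 1 - b) ∈ Finset.Icc (1 : ℤ) ((2 * n : ℕ) : ℤ) :=
        (hmemIcc _).mpr ⟨hb'1, hb'2⟩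
      obtain ⟨h1, h2, h3⟩ := hassoc b hbI
      obtain ⟨hsub, hcard, hstep1, hstep2⟩ := hI.2 b hbI
      obtain ⟨g1, g2, g3⟩ := hassoc _ hb'I
      have hIa' : I (2 * (n : ℤ) + 1 - b) = Rset n (I (b + 1)) := hA b hb1 hb2
      have hIa'1 : I (2 * (n : ℤ) + 1 - b + 1) = Rset n (I b) := by
        rw [show (2 * (n : ℤ) + 1 - b + 1) = 2 * (n : ℤ) + 2 - b by ring]
        exact hB b hb1 hb2
      by_cases heq : I (b + 1) = I b
      · by_cases hmem : b ∈ I b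
        · -- f b = b + 2n, f b' = b'
          have hfa := h2 heq hmem
          rw [hN] at hfa
          have hI'eq : I (2 * (n : ℤ) + 1 - b + 1) = I (2 * (n : ℤ) + 1 - b) := by
            rw [hIa', hIa'1, heq]
          have hmem' : (2 * (n : ℤ) + 1 - b) ∉ I (2 * (n : ℤ) + 1 - b) := by
            intro hx
            rw [hIa', my_mem_Rset] at hx
            obtain ⟨_, hx2⟩ := hx
            rw [show (2 * (n : ℤ) + 1 - (2 * (n : ℤ) + 1 - b)) = b by ring, heq] at hx2
            exact hx2 hmem
          have := g1 hI'eq hmem'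
          rw [this, hfa]; ring
        · -- f b = b, f b' = b' + 2n
          have hfa := h1 heq hmem
          have hI'eq : I (2 * (n : ℤ) + 1 - b + 1) = I (2 * (n : ℤ) + 1 - b) := by
            rw [hIa', hIa'1, heq]
          have hmem' : (2 * (n : ℤ) + 1 - b) ∈ I (2 * (n : ℤ) + 1 - b) := by
            rw [hIa', my_mem_Rset]
            refine ⟨Finset.mem_Icc.mpr ⟨hb'1, hb'2⟩, ?_⟩
            rw [show (2 * (n : ℤ) + 1 - (2 * (n : ℤ) + 1 - b)) = b by ring, heq]
            exact hmem
          have hfb' := g2 hI'eq hmem'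
          rw [hN] at hfb'
          rw [hfb', hfa]; ring
      · -- the moving case
        have hmem : b ∈ I b := by
          by_contra h
          exact heq (hstep2 h)
        obtain ⟨hjne, hins⟩ := h3 heq
        set j := fbar (2 * n) f b with hjdef
        have hj0 : j = (f b - 1) % (2 * (n : ℤ)) + 1 := by
          rw [hjdef]; unfold fbar; rw [hN]
        have hjlb : 1 ≤ j := by
          have := Int.emod_nonneg (f b - 1) (ne_of_gt hpos)
          omega
        have hjub : j ≤ 2 * (n : ℤ) := by
          have := Int.emod_lt_of_pos (f b - 1) hpos
          omega
        have hjneb : j ≠ b := hjne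
        have hjnotmem : j ∉ I b := by
          intro hjm
          have hself : insert j ((I b).erase b) = (I b).erase b :=
            Finset.insert_eq_self.mpr (Finset.mem_erase.mpr ⟨hjneb, hjm⟩)
          have hc1 := hcard1 b hb1 hb2
          rw [hins, hself, Finset.card_erase_of_mem hmem, hcard] at hc1
          omega
        have hbnotmem1 : b ∉ I (b + 1) := by
          rw [hins]
          intro hx
          rcases Finset.mem_insert.mp hx with h | h
          · exact hjneb h.symm
          · exact (Finset.mem_erase.mp h).1 rfl
        have hjmem1 : j ∈ I (b + 1) := by
          rw [hins]; exact Finset.mem_insert_self _ _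
        -- I(b'+1) ≠ I(b')
        have hmemb' : (2 * (n : ℤ) + 1 - b) ∈ I (2 * (n : ℤ) + 1 - b) := by
          rw [hIa', my_mem_Rset]
          refine ⟨Finset.mem_Icc.mpr ⟨hb'1, hb'2⟩, ?_⟩
          rw [show (2 * (n : ℤ) + 1 - (2 * (n : ℤ) + 1 - b)) = b by ring]
          exact hbnotmem1
        have hnotmemb'1 : (2 * (n : ℤ) + 1 - b) ∉ I (2 * (n : ℤ) + 1 - b + 1) := by
          rw [hIa'1, my_mem_Rset]
          rintro ⟨_, hx⟩
          rw [show (2 * (n : ℤ) + 1 - (2 * (n : ℤ) + 1 - b)) = b by ring] at hx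
          exact hx hmem
        have hne' : I (2 * (n : ℤ) + 1 - b + 1) ≠ I (2 * (n : ℤ) + 1 - b) := by
          intro h
          rw [h] at hnotmemb'1
          exact hnotmemb'1 hmemb'
        obtain ⟨hjne2, hins2⟩ := g3 hne'
        set j' := fbar (2 * n) f (2 * (n : ℤ) + 1 - b) with hj'def
        -- σ j ∈ I(b'+1), σ j ∉ I(b')
        have hσj_in : (2 * (n : ℤ) + 1 - j) ∈ I (2 * (n : ℤ) + 1 - b + 1) := by
          rw [hIa'1, my_mem_Rset]
          refine ⟨Finset.mem_Icc.mpr ⟨by linarith, by linarith⟩, ?_⟩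
          rw [show (2 * (n : ℤ) + 1 - (2 * (n : ℤ) + 1 - j)) = j by ring]
          exact hjnotmem
        have hσj_not : (2 * (n : ℤ) + 1 - j) ∉ I (2 * (n : ℤ) + 1 - b) := by
          rw [hIa', my_mem_Rset]
          rintro ⟨_, hx⟩
          rw [show (2 * (n : ℤ) + 1 - (2 * (n : ℤ) + 1 - j)) = j by ring] at hx
          exact hx hjmem1
        have hj'eq : j' = 2 * (n : ℤ) + 1 - j := by
          rw [hins2] at hσj_in
          rcases Finset.mem_insert.mp hσj_in with h | h
          · exact h.symm
          · exact absurd (Finset.mem_of_mem_erase h) hσj_not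
        -- apply the value determination lemma
        have hbd := hf.2.2.1 b
        rw [hN] at hbd
        have hbd' := hf.2.2.1 (2 * (n : ℤ) + 1 - b)
        rw [hN] at hbd'
        have hfbmod : (f b - 1) % (2 * (n : ℤ)) = j - 1 := by omega
        have hor1 := my_bap_val n hn (f b) b j hb1 hb2 hjlb hjub hbd.1 hbd.2 hfbmod
        have hj'0 : j' = (f (2 * (n : ℤ) + 1 - b) - 1) % (2 * (n : ℤ)) + 1 := by
          rw [hj'def]; unfold fbar; rw [hN]
        have hfb'mod : (f (2 * (n : ℤ) + 1 - b) - 1) % (2 * (n : ℤ)) = (2 * (n : ℤ) + 1 - j) - 1 := by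
          omega
        have hor2 := my_bap_val n hn (f (2 * (n : ℤ) + 1 - b)) (2 * (n : ℤ) + 1 - b)
          (2 * (n : ℤ) + 1 - j) hb'1 hb'2 (by linarith) (by linarith) hbd'.1 hbd'.2 hfb'mod
        rcases hor1 with h1' | h1' <;> rcases hor2 with h2' | h2' <;> omega
    -- extend by periodicity to all integers
    have hstep : ∀ i : ℤ, f (i + 2 * (n : ℤ)) = f i + 2 * (n : ℤ) := by
      intro i
      have h := hf.2.1 i
      rw [hN] at h
      exact h
    have hper : ∀ (i t : ℤ), f (i + 2 * (n : ℤ) * t) = f i + 2 * (n : ℤ) * t := by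
      intro i t
      induction t using Int.induction_on with
      | zero => simp
      | succ k ih =>
          have h := hstep (i + 2 * (n : ℤ) * k)
          rw [show (i + 2 * (n : ℤ) * k + 2 * (n : ℤ)) = i + 2 * (n : ℤ) * ((k : ℤ) + 1) by ring]
            at h
          rw [h, ih]; ring
      | pred k ih =>
          have h := hstep (i + 2 * (n : ℤ) * (-(k : ℤ) - 1))
          rw [show (i + 2 * (n : ℤ) * (-(k : ℤ) - 1) + 2 * (n : ℤ)) = i + 2 * (n : ℤ) * (-(k : ℤ))
            by ring] at h
          rw [ih] at h
          have hXY : 2 * (n : ℤ) * (-(k : ℤ) - 1) = 2 * (n : ℤ) * (-(k : ℤ)) - 2 * (n : ℤ) := by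
            ring
          linarith
    intro a
    have h := Int.emod_add_mul_ediv (a - 1) (2 * (n : ℤ))
    have hm0 := Int.emod_nonneg (a - 1) (ne_of_gt hpos)
    have hm1 := Int.emod_lt_of_pos (a - 1) hpos
    set m := (a - 1) % (2 * (n : ℤ)) with hm
    set t := (a - 1) / (2 * (n : ℤ)) with ht
    have hab : a = (m + 1) + 2 * (n : ℤ) * t := by linarith
    have e2 := hper (m + 1) t
    rw [show ((m + 1) + 2 * (n : ℤ) * t) = a by linarith] at e2
    have e1 := hper (2 * (n : ℤ) + 1 - a) t
    rw [show (2 * (n : ℤ) + 1 - a + 2 * (n : ℤ) * t) = 2 * (n : ℤ) + 1 - (m + 1) by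
      linear_combination -hab] at e1
    have e3 := key (m + 1) (by linarith) (by linarith)
    -- goal: f (2n+1-a) = 4n+1 - f a
    linarith
end

section
/- Let (J_1,…,J_{2n}) be a dual Grassmann necklace of type (n,2n) and let f be its associated bounded affine permutation. If R(J_i) = J_{i'+1} for all i ∈ [2n], where i' = 2n+1−i and indices are taken modulo 2n, then f is symmetric, i.e., f(2n+1−a) = 4n+1−f(a) for all a ∈ ℤ. -/
private lemma auxPer (N : ℤ) (f : ℤ → ℤ) (h : ∀ i, f (i + N) = f i + N) :
    ∀ (k i : ℤ), f (i + N * k) = f i + N * k := by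
  intro k
  induction k using Int.induction_on with
  | zero => simp
  | succ m ih =>
      intro i
      have e : i + N * ((m : ℤ) + 1) = (i + N * m) + N := by ring
      rw [e, h (i + N * m), ih i]; ring
  | pred m ih =>
      intro i
      have e : i + N * (-(m : ℤ)) = (i + N * (-(m : ℤ) - 1)) + N := by ring
      have h2 := ih i
      rw [e, h (i + N * (-(m : ℤ) - 1))] at h2
      have : f (i + N * (-(m : ℤ) - 1)) = f i + N * (-(m : ℤ) - 1) := by linarith
      calc f (i + N * (-(m : ℤ) - 1)) = f i + N * (-(m : ℤ) - 1) := this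

private lemma auxK0 (N k : ℤ) (hN : 0 < N) (h1 : -N < N * k) (h2 : N * k < N) : k = 0 := by
  rcases lt_trichotomy k 0 with h | h | h
  · nlinarith
  · exact h
  · nlinarith

private lemma memRset (n : ℕ) (I : Finset ℤ) (x : ℤ) :
    x ∈ Rset n I ↔ (1 ≤ x ∧ x ≤ 2 * (n : ℤ)) ∧ 2 * (n : ℤ) + 1 - x ∉ I := by
  unfold Rset
  rw [Finset.mem_sdiff, Finset.mem_Icc]
  constructor
  · rintro ⟨h1, h2⟩
    refine ⟨h1, fun hmem => h2 ?_⟩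
    exact Finset.mem_image.mpr ⟨2 * (n : ℤ) + 1 - x, hmem, by ring⟩
  · rintro ⟨h1, h2⟩
    refine ⟨h1, fun hmem => ?_⟩
    obtain ⟨y, hy, hyx⟩ := Finset.mem_image.mp hmem
    have : y = 2 * (n : ℤ) + 1 - x := by omega
    exact h2 (this ▸ hy)

private lemma keyStep (n : ℕ) (hn : 0 < n) (J : ℤ → Finset ℤ)
    (hJ : IsDGN (2 * n) n J) (f : ℤ → ℤ) (hf : IsBAP (2 * n) n f)
    (hassoc : DGNAssoc (2 * n) J f)
    (hsymN : ∀ i ∈ Finset.Icc (1 : ℤ) (2 * (n : ℤ)),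
      Rset n (J i) = J (2 * (n : ℤ) + 2 - i)) :
    ∀ a, 1 ≤ a → a ≤ 2 * (n : ℤ) →
      f (2 * (n : ℤ) + 1 - a) = 2 * (2 * (n : ℤ)) + 1 - f a := by
  have c2n : ((2 * n : ℕ) : ℤ) = 2 * (n : ℤ) := by push_cast; ring
  have hNpos : 0 < 2 * (n : ℤ) := by positivity
  obtain ⟨hbij, hper, hbd, -⟩ := hf
  obtain ⟨hJper, hJdat⟩ := hJ
  have hper' : ∀ i, f (i + 2 * (n : ℤ)) = f i + 2 * (n : ℤ) := by
    intro i; have := hper i; rw [c2n] at this; exact this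
  have hJper' : ∀ i, J (i + 2 * (n : ℤ)) = J i := by
    intro i; have := hJper i; rw [c2n] at this; exact this
  have hperk := auxPer (2 * (n : ℤ)) f hper'
  have hfbar_eq : ∀ x, fbar (2 * n) f x = (f x - 1) % (2 * (n : ℤ)) + 1 := by
    intro x; unfold fbar; rw [c2n]
  have hdvd_fb : ∀ x, f x - fbar (2 * n) f x = 2 * (n : ℤ) * ((f x - 1) / (2 * (n : ℤ))) := by
    intro x
    rw [hfbar_eq]
    have h := Int.mul_ediv_add_emod (f x - 1) (2 * (n : ℤ))
    linarith
  have hfb_mem : ∀ x, 1 ≤ fbar (2 * n) f x ∧ fbar (2 * n) f x ≤ 2 * (n : ℤ) := by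
    intro x
    rw [hfbar_eq]
    have h1 := Int.emod_nonneg (f x - 1) (ne_of_gt hNpos)
    have h2 := Int.emod_lt_of_pos (f x - 1) hNpos
    omega
  have hfb_inj : ∀ x, 1 ≤ x → x ≤ 2 * (n : ℤ) → ∀ y, 1 ≤ y → y ≤ 2 * (n : ℤ) →
      fbar (2 * n) f x = fbar (2 * n) f y → x = y := by
    intro x hx1 hx2 y hy1 hy2 hxy
    have d1 := hdvd_fb x
    have d2 := hdvd_fb y
    set k : ℤ := (f x - 1) / (2 * (n : ℤ)) - (f y - 1) / (2 * (n : ℤ)) with hk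
    have hmk : 2 * (n : ℤ) * k
        = 2 * (n : ℤ) * ((f x - 1) / (2 * (n : ℤ))) - 2 * (n : ℤ) * ((f y - 1) / (2 * (n : ℤ))) := by
      rw [hk]; ring
    have hfxy : f x = f y + 2 * (n : ℤ) * k := by rw [hxy] at d1; linarith
    have h3 := hperk k y
    rw [← hfxy] at h3
    have hxyk : x = y + 2 * (n : ℤ) * k := hbij.injective h3.symm
    have hk0 : k = 0 := auxK0 (2 * (n : ℤ)) k hNpos (by linarith) (by linarith)
    rw [hk0] at hxyk; linarith
  have hfb_id : ∀ x, 1 ≤ x → x ≤ 2 * (n : ℤ) → (f x = x ∨ f x = x + 2 * (n : ℤ)) →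
      fbar (2 * n) f x = x := by
    intro x hx1 hx2 h
    rw [hfbar_eq]
    have e3 : (x - 1) % (2 * (n : ℤ)) = x - 1 := Int.emod_eq_of_lt (by omega) (by omega)
    rcases h with h | h
    · rw [h, e3]; ring
    · have e : x + 2 * (n : ℤ) - 1 = (x - 1) + 2 * (n : ℤ) * 1 := by ring
      rw [h, e, Int.add_mul_emod_self_left, e3]
      ring
  -- necklace symmetry lemmas
  have star2 : ∀ a, 1 ≤ a → a ≤ 2 * (n : ℤ) → Rset n (J a) = J (2 * (n : ℤ) + 2 - a) := by
    intro a h1 h2; exact hsymN a (Finset.mem_Icc.mpr ⟨h1, h2⟩)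
  have star1 : ∀ a, 1 ≤ a → a ≤ 2 * (n : ℤ) → J (2 * (n : ℤ) + 1 - a) = Rset n (J (a + 1)) := by
    intro a h1 h2
    rcases eq_or_lt_of_le h2 with rfl | h2'
    · have e1 : J (2 * (n : ℤ) + 1) = J 1 := by
        have := hJper' 1; rw [show (1 : ℤ) + 2 * (n : ℤ) = 2 * (n : ℤ) + 1 by ring] at this
        exact this
      have e2 := star2 1 (by norm_num) (by omega)
      rw [show 2 * (n : ℤ) + 2 - 1 = 2 * (n : ℤ) + 1 by ring, e1] at e2
      rw [show 2 * (n : ℤ) + 1 - 2 * (n : ℤ) = (1 : ℤ) by ring, e1, e2]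
    · have := star2 (a + 1) (by omega) (by omega)
      rw [show 2 * (n : ℤ) + 2 - (a + 1) = 2 * (n : ℤ) + 1 - a by ring] at this
      exact this.symm
  have hJicc : ∀ i, 1 ≤ i → i ≤ 2 * (n : ℤ) + 1 →
      (J i ⊆ Finset.Icc (1 : ℤ) ((2 * n : ℕ) : ℤ) ∧ (J i).card = n) := by
    intro i h1 h2
    rcases eq_or_lt_of_le h2 with rfl | h2'
    · have e1 : J (2 * (n : ℤ) + 1) = J 1 := by
        have := hJper' 1; rw [show (1 : ℤ) + 2 * (n : ℤ) = 2 * (n : ℤ) + 1 by ring] at this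
        exact this
      rw [e1]
      have := hJdat 1 (Finset.mem_Icc.mpr ⟨le_refl 1, by omega⟩)
      exact ⟨this.1, this.2.1⟩
    · have := hJdat i (Finset.mem_Icc.mpr ⟨h1, by omega⟩)
      exact ⟨this.1, this.2.1⟩
  have hJsub : ∀ i, 1 ≤ i → i ≤ 2 * (n : ℤ) + 1 → ∀ y ∈ J i, 1 ≤ y ∧ y ≤ 2 * (n : ℤ) := by
    intro i h1 h2 y hy
    have := (hJicc i h1 h2).1 hy
    rw [Finset.mem_Icc] at this
    omega
  -- case-C structure
  have caseC : ∀ a, 1 ≤ a → a ≤ 2 * (n : ℤ) → J a ≠ J (a + 1) →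
      ∃ j, (1 ≤ j ∧ j ≤ 2 * (n : ℤ)) ∧ j ≠ a ∧ fbar (2 * n) f j = a ∧
        (∀ x, (x ∈ J a ∧ x ∉ J (a + 1)) ↔ x = j) := by
    intro a h1 h2 hne
    obtain ⟨j, hjmem, hja, hjfb, hset⟩ := (hassoc a (Finset.mem_Icc.mpr ⟨h1, by omega⟩)).2.2 hne
    rw [Finset.mem_Icc] at hjmem
    have hcard_a := (hJicc a h1 (by omega)).2
    have hcard_a1 := (hJicc (a + 1) (by omega) (by omega)).2
    have haJ : a ∈ J (a + 1) := by
      by_contra haJ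
      rw [Finset.erase_eq_of_notMem haJ] at hset
      by_cases hjJ : j ∈ J (a + 1)
      · rw [Finset.insert_eq_self.mpr hjJ] at hset; exact hne hset
      · have : (J a).card = (J (a + 1)).card + 1 := by
          rw [hset, Finset.card_insert_of_notMem hjJ]
        omega
    have hjJ : j ∉ J (a + 1) := by
      intro hjJ
      have hje : j ∈ (J (a + 1)).erase a := Finset.mem_erase.mpr ⟨hja, hjJ⟩
      rw [Finset.insert_eq_self.mpr hje] at hset
      have : (J a).card = (J (a + 1)).card - 1 := by
        rw [hset, Finset.card_erase_of_mem haJ]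
      omega
    refine ⟨j, ⟨by omega, by omega⟩, hja, hjfb, fun x => ⟨?_, ?_⟩⟩
    · rintro ⟨hx1, hx2⟩
      rw [hset] at hx1
      rcases Finset.mem_insert.mp hx1 with h | h
      · exact h
      · exact absurd (Finset.mem_of_mem_erase h) hx2
    · rintro rfl
      exact ⟨hset ▸ Finset.mem_insert_self _ _, hjJ⟩
  -- symmetric index is also case C
  have hRne : ∀ a, 1 ≤ a → a ≤ 2 * (n : ℤ) → J a ≠ J (a + 1) →
      J (2 * (n : ℤ) + 1 - a) ≠ J (2 * (n : ℤ) + 1 - a + 1) := by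
    intro a h1 h2 hne heq
    apply hne
    have e1 : J (2 * (n : ℤ) + 1 - a) = Rset n (J (a + 1)) := star1 a h1 h2
    have e2 : J (2 * (n : ℤ) + 1 - a + 1) = Rset n (J a) := by
      rw [show 2 * (n : ℤ) + 1 - a + 1 = 2 * (n : ℤ) + 2 - a by ring]
      exact (star2 a h1 h2).symm
    rw [e1, e2] at heq
    ext y
    constructor
    · intro hy
      by_contra hy'
      have hyI := hJsub a h1 (by omega) y hy
      have hmem : (2 * (n : ℤ) + 1 - y) ∈ Rset n (J (a + 1)) := by
        rw [memRset]
        exact ⟨⟨by omega, by omega⟩,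
          by rw [show 2 * (n : ℤ) + 1 - (2 * (n : ℤ) + 1 - y) = y by ring]; exact hy'⟩
      rw [heq, memRset] at hmem
      exact hmem.2 (by rw [show 2 * (n : ℤ) + 1 - (2 * (n : ℤ) + 1 - y) = y by ring]; exact hy)
    · intro hy
      by_contra hy'
      have hyI := hJsub (a + 1) (by omega) (by omega) y hy
      have hmem : (2 * (n : ℤ) + 1 - y) ∈ Rset n (J a) := by
        rw [memRset]
        exact ⟨⟨by omega, by omega⟩,
          by rw [show 2 * (n : ℤ) + 1 - (2 * (n : ℤ) + 1 - y) = y by ring]; exact hy'⟩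
      rw [← heq, memRset] at hmem
      exact hmem.2 (by rw [show 2 * (n : ℤ) + 1 - (2 * (n : ℤ) + 1 - y) = y by ring]; exact hy)
  -- main argument
  intro a ha1 ha2
  by_cases h1 : J a = J (a + 1)
  · have hmain := hassoc a (Finset.mem_Icc.mpr ⟨ha1, by omega⟩)
    have hmain' := hassoc (2 * (n : ℤ) + 1 - a) (Finset.mem_Icc.mpr ⟨by omega, by omega⟩)
    have e1 : J (2 * (n : ℤ) + 1 - a) = Rset n (J (a + 1)) := star1 a ha1 ha2
    have e2 : J (2 * (n : ℤ) + 1 - a + 1) = Rset n (J a) := by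
      rw [show 2 * (n : ℤ) + 1 - a + 1 = 2 * (n : ℤ) + 2 - a by ring]
      exact (star2 a ha1 ha2).symm
    have heq' : J (2 * (n : ℤ) + 1 - a) = J (2 * (n : ℤ) + 1 - a + 1) := by
      rw [e1, e2, h1]
    by_cases h2 : a ∈ J (a + 1)
    · have hfa : f a = a + ((2 * n : ℕ) : ℤ) := hmain.2.1 h1 h2
      rw [c2n] at hfa
      have h2' : 2 * (n : ℤ) + 1 - a ∉ J (2 * (n : ℤ) + 1 - a + 1) := by
        rw [e2, memRset]
        push_neg
        intro _
        rw [show 2 * (n : ℤ) + 1 - (2 * (n : ℤ) + 1 - a) = a by ring, h1]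
        exact h2
      have := hmain'.1 heq' h2'
      omega
    · have hfa : f a = a := hmain.1 h1 h2
      have h2' : 2 * (n : ℤ) + 1 - a ∈ J (2 * (n : ℤ) + 1 - a + 1) := by
        rw [e2, memRset]
        refine ⟨⟨by omega, by omega⟩, ?_⟩
        rw [show 2 * (n : ℤ) + 1 - (2 * (n : ℤ) + 1 - a) = a by ring, h1]
        exact h2
      have := hmain'.2.1 heq' h2'
      rw [c2n] at this
      omega
  · -- case C
    have hb_mem0 := hfb_mem a
    obtain ⟨b, hbdef⟩ : ∃ b, fbar (2 * n) f a = b := ⟨_, rfl⟩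
    rw [hbdef] at hb_mem0
    have hb_mem : 1 ≤ b ∧ b ≤ 2 * (n : ℤ) := hb_mem0
    have hbne : J b ≠ J (b + 1) := by
      intro heq
      have hm := hassoc b (Finset.mem_Icc.mpr ⟨hb_mem.1, by omega⟩)
      have hfb_b : fbar (2 * n) f b = b := by
        apply hfb_id b hb_mem.1 hb_mem.2
        by_cases hmem : b ∈ J (b + 1)
        · right; have := hm.2.1 heq hmem; rw [c2n] at this; exact this
        · left; exact hm.1 heq hmem
      have hab : a = b := hfb_inj a ha1 ha2 b hb_mem.1 hb_mem.2 (by rw [hfb_b, hbdef])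
      rw [hab] at h1; exact h1 heq
    obtain ⟨j, hjb, hjne, hjfb, hjset⟩ := caseC b hb_mem.1 hb_mem.2 hbne
    have hja : j = a := hfb_inj j hjb.1 hjb.2 a ha1 ha2 (by rw [hjfb, hbdef])
    subst hja
    -- symmetric clause at b' = 2n+1-b
    have hb'ne := hRne b hb_mem.1 hb_mem.2 hbne
    obtain ⟨j', hj'b, hj'ne, hj'fb, hj'set⟩ :=
      caseC (2 * (n : ℤ) + 1 - b) (by omega) (by omega) hb'ne
    have e1 : J (2 * (n : ℤ) + 1 - b) = Rset n (J (b + 1)) := star1 b hb_mem.1 hb_mem.2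
    have e2 : J (2 * (n : ℤ) + 1 - b + 1) = Rset n (J b) := by
      rw [show 2 * (n : ℤ) + 1 - b + 1 = 2 * (n : ℤ) + 2 - b by ring]
      exact (star2 b hb_mem.1 hb_mem.2).symm
    have hjJ : j ∈ J b ∧ j ∉ J (b + 1) := (hjset j).mpr rfl
    have hkey : 2 * (n : ℤ) + 1 - j = j' := by
      apply (hj'set _).mp
      constructor
      · rw [e1, memRset]
        refine ⟨⟨by omega, by omega⟩, ?_⟩
        rw [show 2 * (n : ℤ) + 1 - (2 * (n : ℤ) + 1 - j) = j by ring]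
        exact hjJ.2
      · rw [e2, memRset]
        push_neg
        intro _
        rw [show 2 * (n : ℤ) + 1 - (2 * (n : ℤ) + 1 - j) = j by ring]
        exact hjJ.1
    have hfbsym : fbar (2 * n) f (2 * (n : ℤ) + 1 - j) = 2 * (n : ℤ) + 1 - b := by
      rw [hkey]; exact hj'fb
    -- now pin down f j and f (2n+1-j)
    have d1 : f j - b = 2 * (n : ℤ) * ((f j - 1) / (2 * (n : ℤ))) := by
      have := hdvd_fb j; rw [hjfb] at this; exact this
    have d2 : f (2 * (n : ℤ) + 1 - j) - (2 * (n : ℤ) + 1 - b)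
        = 2 * (n : ℤ) * ((f (2 * (n : ℤ) + 1 - j) - 1) / (2 * (n : ℤ))) := by
      have := hdvd_fb (2 * (n : ℤ) + 1 - j); rw [hfbsym] at this; exact this
    have hbd1 := hbd j
    have hbd2 := hbd (2 * (n : ℤ) + 1 - j)
    rw [c2n] at hbd1 hbd2
    have hne1 : f j ≠ j := by
      intro h; have := hfb_id j hjb.1 hjb.2 (Or.inl h); rw [hjfb] at this; omega
    have hne2 : f j ≠ j + 2 * (n : ℤ) := by
      intro h; have := hfb_id j hjb.1 hjb.2 (Or.inr h); rw [hjfb] at this; omega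
    have hne3 : f (2 * (n : ℤ) + 1 - j) ≠ 2 * (n : ℤ) + 1 - j := by
      intro h
      have := hfb_id (2 * (n : ℤ) + 1 - j) (by omega) (by omega) (Or.inl h)
      rw [hfbsym] at this; omega
    have hne4 : f (2 * (n : ℤ) + 1 - j) ≠ 2 * (n : ℤ) + 1 - j + 2 * (n : ℤ) := by
      intro h
      have := hfb_id (2 * (n : ℤ) + 1 - j) (by omega) (by omega) (Or.inr h)
      rw [hfbsym] at this; omega
    have hdiff : f (2 * (n : ℤ) + 1 - j) - (2 * (2 * (n : ℤ)) + 1 - f j)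
        = 2 * (n : ℤ) * ((f j - 1) / (2 * (n : ℤ))
            + (f (2 * (n : ℤ) + 1 - j) - 1) / (2 * (n : ℤ)) - 1) := by
      rw [mul_sub, mul_add, ← d1, ← d2]; ring
    have hk0 := auxK0 (2 * (n : ℤ))
      ((f j - 1) / (2 * (n : ℤ)) + (f (2 * (n : ℤ) + 1 - j) - 1) / (2 * (n : ℤ)) - 1)
      hNpos (by rw [← hdiff]; omega) (by rw [← hdiff]; omega)
    rw [hk0, mul_zero] at hdiff
    omega

/-- If a dual Grassmann necklace of type `(n,2n)` satisfies `R(J_i) = J_{i'+1}`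
for all `i ∈ [2n]` (with `i' = 2n+1-i`, indices mod `2n`), then its associated bounded
affine permutation is symmetric. -/
theorem dual_necklace_symmetry_implies_BAP_symmetric (n : ℕ) (J : ℤ → Finset ℤ)
    (hJ : IsDGN (2 * n) n J) (f : ℤ → ℤ) (hf : IsBAP (2 * n) n f)
    (hassoc : DGNAssoc (2 * n) J f)
    (hsymN : ∀ i ∈ Finset.Icc (1 : ℤ) (2 * (n : ℤ)),
      Rset n (J i) = J (2 * (n : ℤ) + 2 - i)) :
    IsSymmBAP n f := by
  intro a
  rcases Nat.eq_zero_or_pos n with hn0 | hn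
  · subst hn0
    have hid : ∀ x : ℤ, f x = x := by
      intro x
      have h := hf.2.2.1 x
      norm_num at h
      omega
    rw [hid, hid]
    norm_num
  · have key := keyStep n hn J hJ f hf hassoc hsymN
    have c2n : ((2 * n : ℕ) : ℤ) = 2 * (n : ℤ) := by push_cast; ring
    have hNpos : 0 < 2 * (n : ℤ) := by positivity
    have hper' : ∀ i, f (i + 2 * (n : ℤ)) = f i + 2 * (n : ℤ) := by
      intro i; have := hf.2.1 i; rw [c2n] at this; exact this
    have hperk := auxPer (2 * (n : ℤ)) f hper'
    have hmod1 := Int.emod_nonneg (a - 1) (ne_of_gt hNpos)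
    have hmod2 := Int.emod_lt_of_pos (a - 1) hNpos
    have hdm := Int.mul_ediv_add_emod (a - 1) (2 * (n : ℤ))
    have hmain := key ((a - 1) % (2 * (n : ℤ)) + 1) (by omega) (by omega)
    have hfa : f a = f ((a - 1) % (2 * (n : ℤ)) + 1)
        + 2 * (n : ℤ) * ((a - 1) / (2 * (n : ℤ))) := by
      have h := hperk ((a - 1) / (2 * (n : ℤ))) ((a - 1) % (2 * (n : ℤ)) + 1)
      rw [show (a - 1) % (2 * (n : ℤ)) + 1 + 2 * (n : ℤ) * ((a - 1) / (2 * (n : ℤ))) = a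
        by linarith] at h
      exact h
    have hfa' : f (2 * (n : ℤ) + 1 - a)
        = f (2 * (n : ℤ) + 1 - ((a - 1) % (2 * (n : ℤ)) + 1))
          + 2 * (n : ℤ) * (-((a - 1) / (2 * (n : ℤ)))) := by
      have h := hperk (-((a - 1) / (2 * (n : ℤ))))
        (2 * (n : ℤ) + 1 - ((a - 1) % (2 * (n : ℤ)) + 1))
      rw [show 2 * (n : ℤ) + 1 - ((a - 1) % (2 * (n : ℤ)) + 1)
          + 2 * (n : ℤ) * (-((a - 1) / (2 * (n : ℤ)))) = 2 * (n : ℤ) + 1 - a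
        by linarith] at h
      exact h
    rw [hfa', hmain, hfa]
    ring
end

section
/- Let f be a symmetric bounded affine permutation of type (n,2n), and let (J_1,…,J_{2n}) be a dual Grassmann necklace of type (n,2n) whose associated bounded affine permutation is f. Then R(J_i) = J_{i'+1} for all i ∈ [2n], where i' = 2n+1−i and indices are taken modulo 2n. -/
namespace SymBapAux

lemma gmul {α : Sort*} {N : ℤ} {g : ℤ → α} (h : ∀ i, g (i + N) = g i) :
    ∀ (m : ℤ) (i : ℤ), g (i + m * N) = g i := by
  intro m
  induction m using Int.induction_on with
  | zero => simp
  | succ k ih =>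
      intro i
      have e : i + ((k : ℤ) + 1) * N = (i + (k : ℤ) * N) + N := by ring
      rw [e, h, ih]
  | pred k ih =>
      intro i
      have hsub : ∀ x, g (x - N) = g x := fun x => by simpa using (h (x - N)).symm
      have e : i + (-(k : ℤ) - 1) * N = (i + (-(k : ℤ)) * N) - N := by ring
      rw [e, hsub, ih]

lemma fmul {N : ℤ} {f : ℤ → ℤ} (h : ∀ i, f (i + N) = f i + N) :
    ∀ (m : ℤ) (i : ℤ), f (i + m * N) = f i + m * N := by
  intro m
  induction m using Int.induction_on with
  | zero => simp
  | succ k ih =>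
      intro i
      have e : i + ((k : ℤ) + 1) * N = (i + (k : ℤ) * N) + N := by ring
      rw [e, h, ih]; ring
  | pred k ih =>
      intro i
      have hsub : ∀ x, f (x - N) = f x - N := by
        intro x
        have h2 := h (x - N)
        have e2 : x - N + N = x := by ring
        rw [e2] at h2
        linarith
      have e : i + (-(k : ℤ) - 1) * N = (i + (-(k : ℤ)) * N) - N := by ring
      rw [e, hsub, ih]; ring

lemma eq_of_dvd_sub {N a b : ℤ} (ha : a ∈ Finset.Icc 1 N) (hb : b ∈ Finset.Icc 1 N)
    (h : N ∣ a - b) : a = b := by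
  simp only [Finset.mem_Icc] at ha hb
  obtain ⟨m, hm⟩ := h
  rcases lt_trichotomy m 0 with hm0 | hm0 | hm0
  · have h1 : N * m ≤ N * (-1) := mul_le_mul_of_nonneg_left (by omega) (by omega)
    linarith
  · subst hm0; simp at hm; omega
  · have h1 : N * 1 ≤ N * m := mul_le_mul_of_nonneg_left (by omega) (by omega)
    linarith

lemma emod_eq_of_dvd_sub {N a b : ℤ} (h : N ∣ a - b) : a % N = b % N :=
  Int.emod_eq_emod_iff_emod_sub_eq_zero.mpr (Int.emod_eq_zero_of_dvd h)

lemma dvd_self_sub_emod (N a : ℤ) : N ∣ a - a % N :=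
  ⟨a / N, by have := Int.mul_ediv_add_emod a N; linarith⟩

lemma neg_one_emod {N : ℤ} (hN : 0 < N) : (-1) % N = N - 1 := by
  rw [show (-1 : ℤ) = (N - 1) + N * (-1) from by ring, Int.add_mul_emod_self_left]
  exact Int.emod_eq_of_lt (by omega) (by omega)

lemma shift {N a d : ℤ} (hN : 0 < N) (h0 : a % N ≠ 0) (hd : a % N ≠ d) :
    ((a - 1) % N < d ↔ a % N < d) := by
  have hN1 : N ≠ 1 := by
    rintro rfl
    exact h0 (Int.emod_one a)
  have hr0 : 0 ≤ a % N := Int.emod_nonneg a hN.ne'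
  have hrN : a % N < N := Int.emod_lt_of_pos a hN
  have h1 : (a - 1) % N = a % N - 1 := by
    conv_lhs => rw [Int.sub_emod]
    rw [show (1 : ℤ) % N = 1 from Int.emod_eq_of_lt (by norm_num) (by omega)]
    exact Int.emod_eq_of_lt (by omega) (by omega)
  rw [h1]
  constructor
  · intro h; exact lt_of_le_of_ne (by linarith) hd
  · intro h; linarith

lemma emod_add_emod_rev {N : ℤ} (hN : 0 < N) (a : ℤ) :
    a % N + (-1 - a) % N = N - 1 := by
  have hu0 : 0 ≤ a % N := Int.emod_nonneg a hN.ne'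
  have huN : a % N < N := Int.emod_lt_of_pos a hN
  have hv0 : 0 ≤ (-1 - a) % N := Int.emod_nonneg _ hN.ne'
  have hvN : (-1 - a) % N < N := Int.emod_lt_of_pos _ hN
  have hmod : (a % N + (-1 - a) % N) % N = N - 1 := by
    rw [← Int.add_emod, show a + (-1 - a) = (-1 : ℤ) from by ring, neg_one_emod hN]
  rcases lt_or_ge (a % N + (-1 - a) % N) N with h | h
  · rw [Int.emod_eq_of_lt (by linarith) h] at hmod
    exact hmod
  · have e : a % N + (-1 - a) % N = (a % N + (-1 - a) % N - N) + N * 1 := by ring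
    rw [e, Int.add_mul_emod_self_left,
      Int.emod_eq_of_lt (by linarith) (by linarith)] at hmod
    linarith

end SymBapAux
namespace SymBapAux

/-- The key structural lemma: membership in a dual Grassmann necklace is
characterized by the associated bounded affine permutation. -/
lemma memJ {N : ℤ} {f : ℤ → ℤ} {J : ℤ → Finset ℤ}
    (hN : 0 < N)
    (hfinj : Function.Injective f)
    (hfper : ∀ i, f (i + N) = f i + N)
    (hfb : ∀ i : ℤ, i ≤ f i ∧ f i ≤ i + N)
    (hJper : ∀ i, J (i + N) = J i)
    (hJ4 : ∀ i ∈ Finset.Icc (1:ℤ) N, i ∉ J (i+1) → J i = J (i+1))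
    (hA1 : ∀ i ∈ Finset.Icc (1:ℤ) N, J i = J (i + 1) → i ∉ J (i + 1) → f i = i)
    (hA2 : ∀ i ∈ Finset.Icc (1:ℤ) N, J i = J (i + 1) → i ∈ J (i + 1) → f i = i + N)
    (hA3 : ∀ i ∈ Finset.Icc (1:ℤ) N, J i ≠ J (i + 1) →
      ∃ j ∈ Finset.Icc (1:ℤ) N, j ≠ i ∧ (f j - 1) % N + 1 = i ∧
        J i = insert j ((J (i + 1)).erase i))
    {x : ℤ} (hx : x ∈ Finset.Icc (1:ℤ) N) :
    ∀ i : ℤ, (x ∈ J i ↔ (i - x - 1) % N < f x - x) := by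
  have hxI := Finset.mem_Icc.mp hx
  -- injectivity of f̄ on [1,N]
  have hbar_inj : ∀ a ∈ Finset.Icc (1:ℤ) N, ∀ b ∈ Finset.Icc (1:ℤ) N,
      (f a - 1) % N = (f b - 1) % N → a = b := by
    intro a ha b hb h
    have hdvd : N ∣ (f a - 1) - (f b - 1) := by
      rw [Int.emod_eq_emod_iff_emod_sub_eq_zero] at h
      exact Int.dvd_of_emod_eq_zero h
    obtain ⟨m, hm⟩ := hdvd
    have happ : f (b + m * N) = f a := by
      rw [fmul hfper]
      have := mul_comm m N
      linarith
    have hba := hfinj happ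
    exact eq_of_dvd_sub ha hb ⟨m, by have := mul_comm m N; linarith⟩
  -- f̄(a) = a when f a ∈ {a, a+N}
  have hbar_self : ∀ a ∈ Finset.Icc (1:ℤ) N, (f a = a ∨ f a = a + N) →
      (f a - 1) % N = a - 1 := by
    intro a ha h
    have haI := Finset.mem_Icc.mp ha
    have h1 : (a - 1) % N = a - 1 := Int.emod_eq_of_lt (by omega) (by omega)
    rcases h with h | h
    · rw [h]; exact h1
    · rw [h, show a + N - 1 = (a - 1) + N * 1 from by ring, Int.add_mul_emod_self_left]
      exact h1
  -- if f i ∈ {i, i+N} then the necklace is constant at i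
  have hstep_eq : ∀ i ∈ Finset.Icc (1:ℤ) N, (f i = i ∨ f i = i + N) → J i = J (i+1) := by
    intro i hi h
    by_contra hne
    obtain ⟨j, hj, hji, hjbar, -⟩ := hA3 i hi hne
    have hji' : (f j - 1) % N = (f i - 1) % N := by
      rw [hbar_self i hi h]; linarith
    exact hji (hbar_inj j hj i hi hji')
  -- if f i ∉ {i, i+N} then the necklace changes at i
  have hstep_ne : ∀ i ∈ Finset.Icc (1:ℤ) N, f i ≠ i → f i ≠ i + N →
      ∃ j ∈ Finset.Icc (1:ℤ) N, j ≠ i ∧ (f j - 1) % N + 1 = i ∧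
        J i = insert j ((J (i + 1)).erase i) := by
    intro i hi h1 h2
    apply hA3 i hi
    intro heq
    by_cases hmem : i ∈ J (i+1)
    · exact h2 (hA2 i hi heq hmem)
    · exact h1 (hA1 i hi heq hmem)
  -- f̄(x) = i from divisibility
  have hfbar_of_dvd : ∀ i : ℤ, i ∈ Finset.Icc (1:ℤ) N → (N ∣ i - f x) →
      (f x - 1) % N = i - 1 := by
    intro i hi h
    have hiI := Finset.mem_Icc.mp hi
    have h2 : N ∣ (f x - 1) - (i - 1) := by
      rw [show (f x - 1) - (i - 1) = -(i - f x) from by ring]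
      exact dvd_neg.mpr h
    have h3 := emod_eq_of_dvd_sub h2
    rw [h3]
    exact Int.emod_eq_of_lt (by omega) (by omega)
  -- shifting the predicate
  have hcondshift : ∀ i : ℤ, ¬ (N ∣ i - x) → ¬ (N ∣ i - f x) →
      ((i - x - 1) % N < f x - x ↔ (i + 1 - x - 1) % N < f x - x) := by
    intro i h1 h2
    rw [show i + 1 - x - 1 = i - x from by ring]
    have h0 : (i - x) % N ≠ 0 := fun h => h1 (Int.dvd_of_emod_eq_zero h)
    have hdne : (i - x) % N ≠ f x - x := by
      intro h
      apply h2
      rw [show i - f x = (i - x) - (i - x) % N from by rw [h]; ring]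
      exact dvd_self_sub_emod N (i - x)
    exact shift hN h0 hdne
  -- base case
  have hbase : x ∈ J (x + 1) ↔ (x + 1 - x - 1) % N < f x - x := by
    rw [show x + 1 - x - 1 = (0:ℤ) from by ring, Int.zero_emod]
    constructor
    · intro hmem
      by_contra h
      have hfx : f x = x := le_antisymm (by omega) (hfb x).1
      have heq : J x = J (x+1) := hstep_eq x hx (Or.inl hfx)
      have := hA2 x hx heq hmem
      omega
    · intro h
      by_contra hmem
      have heq := hJ4 x hx hmem
      have := hA1 x hx heq hmem
      omega
  -- the inductive step, for i ∈ [1,N]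
  have hstep : ∀ i ∈ Finset.Icc (1:ℤ) N,
      ((x ∈ J (i+1)) ↔ (i + 1 - x - 1) % N < f x - x) →
      ((x ∈ J i) ↔ (i - x - 1) % N < f x - x) := by
    intro i hi ih
    have hiI := Finset.mem_Icc.mp hi
    by_cases hfi : f i = i ∨ f i = i + N
    · have hJeq : J i = J (i+1) := hstep_eq i hi hfi
      rw [hJeq, ih]
      by_cases hix : i = x
      · subst hix
        rw [show i + 1 - i - 1 = (0:ℤ) from by ring, Int.zero_emod,
          show i - i - 1 = (-1:ℤ) from by ring, neg_one_emod hN]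
        rcases hfi with h | h <;> rw [h] <;> omega
      · have hne1 : ¬ (N ∣ i - x) := fun h => hix (eq_of_dvd_sub hi hx h)
        have hne2 : ¬ (N ∣ i - f x) := by
          intro hdvd
          have hfx := hfbar_of_dvd i hi hdvd
          have hfi' := hbar_self i hi hfi
          exact hix ((hbar_inj x hx i hi (by rw [hfx, hfi'])).symm)
        exact (hcondshift i hne1 hne2).symm
    · push_neg at hfi
      obtain ⟨j, hj, hji, hjbar, hJi⟩ := hstep_ne i hi hfi.1 hfi.2
      rw [hJi]
      simp only [Finset.mem_insert, Finset.mem_erase]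
      by_cases hxj : x = j
      · -- x is the inserted element
        have hbx : (f x - 1) % N + 1 = i := by rw [hxj]; exact hjbar
        have hxi : x ≠ i := by rw [hxj]; exact hji
        have hdpos : x < f x := by
          by_contra h
          have hfx : f x = x := le_antisymm (by omega) (hfb x).1
          have hq : (f x - 1) % N = x - 1 := by
            rw [hfx]; exact Int.emod_eq_of_lt (by omega) (by omega)
          exact hxi (by linarith)
        have hClt : (i - x - 1) % N = f x - x - 1 := by
          have h3 : (f x - 1) % N = i - 1 := by linarith
          have h2 := dvd_self_sub_emod N (f x - 1)
          rw [h3] at h2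
          have h1 : N ∣ (i - x - 1) - (f x - x - 1) := by
            rw [show (i - x - 1) - (f x - x - 1) = -((f x - 1) - (i - 1)) from by ring]
            exact dvd_neg.mpr h2
          rw [emod_eq_of_dvd_sub h1]
          have := (hfb x).2
          exact Int.emod_eq_of_lt (by omega) (by omega)
        rw [hClt]
        constructor
        · intro _; omega
        · intro _; exact Or.inl hxj
      · by_cases hxi : x = i
        · subst hxi
          apply iff_of_false
          · rintro (h | h)
            · exact hxj h
            · exact h.1 rfl
          · rw [show x - x - 1 = (-1:ℤ) from by ring, neg_one_emod hN]
            have hb2 := (hfb x).2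
            have hfn := hfi.2
            omega
        · have hLHS : (x = j ∨ (x ≠ i ∧ x ∈ J (i+1))) ↔ x ∈ J (i+1) := by
            constructor
            · rintro (h | h)
              · exact absurd h hxj
              · exact h.2
            · intro h; exact Or.inr ⟨hxi, h⟩
          rw [hLHS, ih]
          have hne1 : ¬ (N ∣ i - x) := fun h => hxi (eq_of_dvd_sub hi hx h).symm
          have hne2 : ¬ (N ∣ i - f x) := by
            intro hdvd
            have hfx := hfbar_of_dvd i hi hdvd
            have hfj : (f j - 1) % N = i - 1 := by linarith
            exact hxj (hbar_inj x hx j hj (by rw [hfx, hfj]))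
          exact (hcondshift i hne1 hne2).symm
  -- extend the step to all integers
  have hstep_all : ∀ a b : ℤ, b = a + 1 →
      ((x ∈ J b) ↔ (b - x - 1) % N < f x - x) →
      ((x ∈ J a) ↔ (a - x - 1) % N < f x - x) := by
    intro a b hb ih
    subst hb
    obtain ⟨i0, m, hi0, rfl⟩ : ∃ i0 m, i0 ∈ Finset.Icc (1:ℤ) N ∧ a = i0 + m * N := by
      refine ⟨(a-1) % N + 1, (a-1) / N, ?_, ?_⟩
      · simp only [Finset.mem_Icc]
        constructor
        · linarith [Int.emod_nonneg (a-1) hN.ne']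
        · linarith [Int.emod_lt_of_pos (a-1) hN]
      · have h1 := Int.mul_ediv_add_emod (a-1) N
        have h2 := mul_comm ((a-1)/N) N
        linarith
    have hJt : ∀ c : ℤ, J (c + m * N) = J c := fun c => gmul hJper m c
    have hCt : ∀ c : ℤ, (c + m * N - x - 1) % N = (c - x - 1) % N := by
      intro c
      rw [show c + m * N - x - 1 = (c - x - 1) + N * m from by ring,
        Int.add_mul_emod_self_left]
    have ih' : (x ∈ J (i0 + 1)) ↔ (i0 + 1 - x - 1) % N < f x - x := by
      rw [show i0 + m * N + 1 = (i0 + 1) + m * N from by ring, hJt, hCt] at ih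
      exact ih
    have := hstep i0 hi0 ih'
    rw [← hJt i0, ← hCt i0] at this
    exact this
  -- downward induction
  have hdown : ∀ t : ℕ, (x ∈ J (x + 1 - t) ↔ (x + 1 - t - x - 1) % N < f x - x) := by
    intro t
    induction t with
    | zero => simpa using hbase
    | succ k ih =>
        refine hstep_all _ (x + 1 - (k:ℕ)) (by push_cast; ring) ih
  -- conclude for all integers
  intro i
  have hm0 : 0 ≤ |x + 1 - i| := abs_nonneg _
  have hmN : |x + 1 - i| * 1 ≤ |x + 1 - i| * N := by
    apply mul_le_mul_of_nonneg_left (by omega) hm0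
  have hge : 0 ≤ x + 1 - i + |x + 1 - i| * N := by
    have := neg_abs_le (x + 1 - i)
    linarith
  set t : ℕ := (x + 1 - i + |x + 1 - i| * N).toNat with ht
  have htv : (t : ℤ) = x + 1 - i + |x + 1 - i| * N := Int.toNat_of_nonneg hge
  have hP := hdown t
  rw [show x + 1 - (t:ℤ) = i + (-(|x + 1 - i|)) * N from by rw [htv]; ring] at hP
  rw [gmul hJper] at hP
  rw [show i + (-(|x + 1 - i|)) * N - x - 1 = (i - x - 1) + N * (-(|x + 1 - i|)) from by ring,
    Int.add_mul_emod_self_left] at hP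
  exact hP

end SymBapAux

/-- If `f` is a symmetric bounded affine permutation of type `(n,2n)` and
`(J_1,…,J_{2n})` is a dual Grassmann necklace whose associated bounded affine permutation
is `f`, then `R(J_i) = J_{i'+1}` for all `i ∈ [2n]` (with `i' = 2n+1-i`, indices mod `2n`). -/
theorem symmetric_BAP_implies_dual_necklace_symmetry (n : ℕ) (f : ℤ → ℤ)
    (hf : IsBAP (2 * n) n f) (hsym : IsSymmBAP n f)
    (J : ℤ → Finset ℤ) (hJ : IsDGN (2 * n) n J) (hassoc : DGNAssoc (2 * n) J f) :
    ∀ i ∈ Finset.Icc (1 : ℤ) (2 * (n : ℤ)),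
      Rset n (J i) = J (2 * (n : ℤ) + 2 - i) := by
  intro i hi
  rcases Nat.eq_zero_or_pos n with h0 | hn
  · subst h0
    rw [Finset.mem_Icc] at hi
    norm_num at hi
    omega
  have hN : 0 < 2 * (n : ℤ) := by
    have : (1 : ℤ) ≤ n := by exact_mod_cast hn
    omega
  have hiI := Finset.mem_Icc.mp hi
  -- normalize the hypotheses (casts)
  have hfinj : Function.Injective f := hf.1.injective
  have hfper : ∀ a : ℤ, f (a + 2 * (n:ℤ)) = f a + 2 * (n:ℤ) := by
    have h := hf.2.1; push_cast at h; exact h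
  have hfb : ∀ a : ℤ, a ≤ f a ∧ f a ≤ a + 2 * (n:ℤ) := by
    have h := hf.2.2.1; push_cast at h; exact h
  have hJper : ∀ a : ℤ, J (a + 2 * (n:ℤ)) = J a := by
    have h := hJ.1; push_cast at h; exact h
  have hJmain := hJ.2
  push_cast at hJmain
  have hassoc' := hassoc
  simp only [DGNAssoc, fbar] at hassoc'; push_cast at hassoc'
  have hJ4 : ∀ a ∈ Finset.Icc (1:ℤ) (2*(n:ℤ)), a ∉ J (a+1) → J a = J (a+1) :=
    fun a ha => (hJmain a ha).2.2.2
  have hA1 : ∀ a ∈ Finset.Icc (1:ℤ) (2*(n:ℤ)), J a = J (a + 1) → a ∉ J (a + 1) → f a = a :=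
    fun a ha => (hassoc' a ha).1
  have hA2 : ∀ a ∈ Finset.Icc (1:ℤ) (2*(n:ℤ)), J a = J (a + 1) → a ∈ J (a + 1) →
      f a = a + 2*(n:ℤ) := fun a ha => (hassoc' a ha).2.1
  have hA3 : ∀ a ∈ Finset.Icc (1:ℤ) (2*(n:ℤ)), J a ≠ J (a + 1) →
      ∃ j ∈ Finset.Icc (1:ℤ) (2*(n:ℤ)), j ≠ a ∧ (f j - 1) % (2*(n:ℤ)) + 1 = a ∧
        J a = insert j ((J (a + 1)).erase a) := fun a ha => (hassoc' a ha).2.2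
  have hmem : ∀ x ∈ Finset.Icc (1:ℤ) (2*(n:ℤ)), ∀ a : ℤ,
      (x ∈ J a ↔ (a - x - 1) % (2*(n:ℤ)) < f x - x) :=
    fun x hx a => SymBapAux.memJ hN hfinj hfper hfb hJper hJ4 hA1 hA2 hA3 hx a
  -- the necklace is contained in [1, 2n] everywhere
  have hJsub : ∀ a : ℤ, J a ⊆ Finset.Icc (1:ℤ) (2*(n:ℤ)) := by
    intro a
    obtain ⟨i0, m, hi0, rfl⟩ : ∃ i0 m, i0 ∈ Finset.Icc (1:ℤ) (2*(n:ℤ)) ∧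
        a = i0 + m * (2*(n:ℤ)) := by
      refine ⟨(a-1) % (2*(n:ℤ)) + 1, (a-1) / (2*(n:ℤ)), ?_, ?_⟩
      · simp only [Finset.mem_Icc]
        constructor
        · linarith [Int.emod_nonneg (a-1) hN.ne']
        · linarith [Int.emod_lt_of_pos (a-1) hN]
      · have h1 := Int.mul_ediv_add_emod (a-1) (2*(n:ℤ))
        have h2 := mul_comm ((a-1)/(2*(n:ℤ))) (2*(n:ℤ))
        linarith
    rw [SymBapAux.gmul hJper m i0]
    exact (hJmain i0 hi0).1
  -- the key pointwise equivalence
  have key : ∀ y : ℤ, 1 ≤ y → y ≤ 2*(n:ℤ) →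
      ((2*(n:ℤ) + 1 - y) ∉ J i ↔ y ∈ J (2*(n:ℤ) + 2 - i)) := by
    intro y hy1 hy2
    rw [hmem y (by rw [Finset.mem_Icc]; omega) (2*(n:ℤ) + 2 - i),
      hmem (2*(n:ℤ) + 1 - y) (by rw [Finset.mem_Icc]; omega) i]
    rw [hsym y]
    rw [show i - (2 * (n:ℤ) + 1 - y) - 1 = (i + y - 2) + (2*(n:ℤ)) * (-1) from by ring,
      Int.add_mul_emod_self_left]
    rw [show 2*(n:ℤ) + 2 - i - y - 1 = (-1 - (i + y - 2)) + (2*(n:ℤ)) * 1 from by ring,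
      Int.add_mul_emod_self_left]
    have hid := SymBapAux.emod_add_emod_rev hN (i + y - 2)
    rw [show 4 * (n:ℤ) + 1 - f y - (2 * (n:ℤ) + 1 - y) = 2*(n:ℤ) - (f y - y) from by ring]
    generalize hu : (i + y - 2) % (2*(n:ℤ)) = u at hid ⊢
    generalize hv : (-1 - (i + y - 2)) % (2*(n:ℤ)) = v at hid ⊢
    constructor
    · intro h
      push_neg at h
      omega
    · intro h
      push_neg
      omega
  -- finish by extensionality
  ext y
  simp only [Rset, Finset.mem_sdiff, Finset.mem_image, Finset.mem_Icc, not_exists]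
  constructor
  · rintro ⟨⟨hy1, hy2⟩, hno⟩
    refine (key y hy1 hy2).mp ?_
    intro hmem'
    exact (hno (2*(n:ℤ) + 1 - y)) ⟨hmem', by ring⟩
  · intro hy
    have hyI := Finset.mem_Icc.mp (hJsub _ hy)
    have hnot := (key y hyI.1 hyI.2).mpr hy
    refine ⟨⟨hyI.1, hyI.2⟩, ?_⟩
    rintro z ⟨hz, hzeq⟩
    apply hnot
    rw [show 2*(n:ℤ) + 1 - y = z from by omega]
    exact hz
end

section
/- Let M be a real k×n matrix of rank k. Then its span-permutation f_M is a bounded affine permutation of type (k,n): f_M is a bijection of ℤ, f_M(i+n) = f_M(i)+n for all i, i ≤ f_M(i) ≤ i+n for all i, and Σ_{i=1}^{n} (f_M(i) − i) = kn. -/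
private lemma window_eq {N a b c : ℤ} (hd : N ∣ a - b) (h1 : c < a) (h2 : a ≤ c + N)
    (h3 : c < b) (h4 : b ≤ c + N) : a = b := by
  have habs : |a - b| < N := abs_lt.mpr ⟨by omega, by omega⟩
  have := Int.eq_zero_of_abs_lt_dvd hd habs
  omega

private lemma emod_eq_dvd {N a b : ℤ} (h : a % N = b % N) : N ∣ a - b :=
  Int.ModEq.dvd (h.symm : Int.ModEq N b a)

private lemma dvd_trans_sub {N x y z : ℤ} (h1 : N ∣ x - y) (h2 : N ∣ y - z) : N ∣ x - z := by
  have := dvd_add h1 h2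
  rwa [sub_add_sub_cancel] at this

private lemma dvd_repA (N a : ℤ) : N ∣ ((a - 1) % N + 1) - a := by
  refine ⟨-((a - 1) / N), ?_⟩
  have h1 : (a - 1) % N + N * ((a - 1) / N) = a - 1 := Int.emod_add_mul_ediv _ _
  have h2 : N * -((a - 1) / N) = -(N * ((a - 1) / N)) := by ring
  omega

private lemma bound_repA {N : ℤ} (hN : 0 < N) (a : ℤ) :
    1 ≤ (a - 1) % N + 1 ∧ (a - 1) % N + 1 ≤ N := by
  have h1 := Int.emod_nonneg (a - 1) (by omega : N ≠ 0)
  have h2 := Int.emod_lt_of_pos (a - 1) hN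
  omega

private lemma dvd_repC (N a m : ℤ) : N ∣ (m - (m - a) % N) - a := by
  refine ⟨(m - a) / N, ?_⟩
  have h1 : (m - a) % N + N * ((m - a) / N) = m - a := Int.emod_add_mul_ediv _ _
  omega

private lemma bound_repC {N : ℤ} (hN : 0 < N) (a m : ℤ) :
    m - N < m - (m - a) % N ∧ m - (m - a) % N ≤ m := by
  have h1 := Int.emod_nonneg (m - a) (by omega : N ≠ 0)
  have h2 := Int.emod_lt_of_pos (m - a) hN
  omega

private lemma spbap_vper {k n : ℕ} (v : ℤ → Fin k → ℝ)
    (hper : ∀ j : ℤ, v (j + (n : ℤ)) = v j) :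
    ∀ t : ℤ, ∀ j : ℤ, v (j + t * (n : ℤ)) = v j := by
  intro t
  induction t using Int.induction_on with
  | zero => simp
  | succ i ih =>
    intro j
    have h1 : j + ((i : ℤ) + 1) * (n : ℤ) = (j + i * n) + n := by ring
    rw [h1, hper, ih]
  | pred i ih =>
    intro j
    have h1 := hper (j + (-(i : ℤ) - 1) * (n : ℤ))
    have h2 : j + (-(i : ℤ) - 1) * (n : ℤ) + (n : ℤ) = j + (-(i : ℤ)) * n := by ring
    rw [h2] at h1
    rw [← h1, ih]

private lemma spbap_shift {k n : ℕ} (v : ℤ → Fin k → ℝ)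
    (hper : ∀ j : ℤ, v (j + (n : ℤ)) = v j) (i r : ℤ) :
    v '' Set.Ioc (i + (n : ℤ)) (r + (n : ℤ)) = v '' Set.Ioc i r := by
  ext x
  constructor
  · rintro ⟨y, hy, rfl⟩
    simp only [Set.mem_Ioc] at hy
    refine ⟨y - n, ?_, ?_⟩
    · simp only [Set.mem_Ioc]; omega
    · rw [← hper (y - n), sub_add_cancel]
  · rintro ⟨y, hy, rfl⟩
    simp only [Set.mem_Ioc] at hy
    refine ⟨y + n, ?_, hper y⟩
    simp only [Set.mem_Ioc]; omega

private lemma spbap_span_top {k n : ℕ} (v : ℤ → Fin k → ℝ)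
    (hper : ∀ j : ℤ, v (j + (n : ℤ)) = v j)
    (hrank : Submodule.span ℝ (v '' Set.Icc (1 : ℤ) (n : ℤ)) = ⊤) (m : ℤ) :
    Submodule.span ℝ (v '' Set.Ioc (m - (n : ℤ)) m) = ⊤ := by
  have vper := spbap_vper v hper
  refine top_unique ?_
  rw [← hrank]
  apply Submodule.span_mono
  rintro x ⟨y, hy, rfl⟩
  simp only [Set.mem_Icc] at hy
  rcases Nat.eq_zero_or_pos n with h0 | h0
  · exfalso; subst h0; simp at hy; omega
  · have hN : (0 : ℤ) < (n : ℤ) := by exact_mod_cast h0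
    refine ⟨y + ((m - y) / (n : ℤ)) * (n : ℤ), ?_, vper _ y⟩
    simp only [Set.mem_Ioc]
    have h1 := Int.emod_nonneg (m - y) (by omega : (n : ℤ) ≠ 0)
    have h2 := Int.emod_lt_of_pos (m - y) hN
    have h3 : (m - y) % (n : ℤ) + (n : ℤ) * ((m - y) / (n : ℤ)) = m - y :=
      Int.emod_add_mul_ediv _ _
    have h4 : ((m - y) / (n : ℤ)) * (n : ℤ) = (n : ℤ) * ((m - y) / (n : ℤ)) := by ring
    omega

private lemma spbap_card {k n : ℕ} (v : ℤ → Fin k → ℝ) (f : ℤ → ℤ)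
    (hf : IsSpanPerm v f)
    (hsp : ∀ m : ℤ, Submodule.span ℝ (v '' Set.Ioc (m - (n : ℤ)) m) = ⊤) (m : ℤ) :
    ((Finset.Ioc (m - (n : ℤ)) m).filter (fun i => m < f i)).card = k := by
  classical
  have hnotmem : ∀ i r : ℤ, i ≤ r → r < f i →
      v i ∉ Submodule.span ℝ (v '' Set.Ioc i r) := by
    intro i r hir hrf hmem
    exact absurd ((hf i).2.2 r hir hmem) (not_le.mpr hrf)
  have main : ∀ d : ℕ,
      Submodule.span ℝ (v '' Set.Ioc (m - (d : ℤ)) m)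
        = Submodule.span ℝ (v '' ↑((Finset.Ioc (m - (d : ℤ)) m).filter (fun i => m < f i)))
      ∧ LinearIndependent ℝ
          (fun x : (v '' ↑((Finset.Ioc (m - (d : ℤ)) m).filter (fun i => m < f i))) =>
            (x : Fin k → ℝ))
      ∧ Set.InjOn v ↑((Finset.Ioc (m - (d : ℤ)) m).filter (fun i => m < f i)) := by
    intro d
    induction d with
    | zero =>
      have hE : (Finset.Ioc (m - ((0 : ℕ) : ℤ)) m) = (∅ : Finset ℤ) := by simp
      have hE2 : Set.Ioc (m - ((0 : ℕ) : ℤ)) m = (∅ : Set ℤ) := by simp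
      rw [hE, hE2, Finset.filter_empty, Finset.coe_empty, Set.image_empty]
      exact ⟨rfl, linearIndependent_empty ℝ _, Set.injOn_empty _⟩
    | succ d ih =>
      obtain ⟨ha, hb, hc⟩ := ih
      have hcast : ((d + 1 : ℕ) : ℤ) = (d : ℤ) + 1 := by push_cast; ring
      rw [hcast]
      have hd0 : (0 : ℤ) ≤ (d : ℤ) := Int.natCast_nonneg d
      have hsetIoc : Set.Ioc (m - ((d : ℤ) + 1)) m
          = insert (m - (d : ℤ)) (Set.Ioc (m - (d : ℤ)) m) := by
        ext x; simp only [Set.mem_Ioc, Set.mem_insert_iff]; omega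
      have hfinIoc : Finset.Ioc (m - ((d : ℤ) + 1)) m
          = insert (m - (d : ℤ)) (Finset.Ioc (m - (d : ℤ)) m) := by
        ext x; simp only [Finset.mem_Ioc, Finset.mem_insert]; omega
      have hsnot : (m - (d : ℤ)) ∉ Finset.Ioc (m - (d : ℤ)) m := by
        simp only [Finset.mem_Ioc]; omega
      rw [hsetIoc, hfinIoc, Finset.filter_insert]
      by_cases hfs : m < f (m - (d : ℤ))
      · rw [if_pos hfs]
        have hsnot' : (m - (d : ℤ)) ∉ (((Finset.Ioc (m - (d : ℤ)) m).filter
            (fun i => m < f i)) : Set ℤ) := by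
          simp only [Finset.coe_filter, Set.mem_setOf_eq]
          intro h; exact hsnot h.1
        have hnot : v (m - (d : ℤ)) ∉ Submodule.span ℝ
            (v '' ↑((Finset.Ioc (m - (d : ℤ)) m).filter (fun i => m < f i))) := by
          rw [← ha]
          exact hnotmem (m - (d : ℤ)) m (by omega) hfs
        refine ⟨?_, ?_, ?_⟩
        · rw [Set.image_insert_eq, Finset.coe_insert, Set.image_insert_eq,
            Submodule.span_insert, Submodule.span_insert, ha]
        · rw [Finset.coe_insert, Set.image_insert_eq]
          exact LinearIndepOn.id_insert hb hnot
        · rw [Finset.coe_insert, Set.injOn_insert hsnot']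
          exact ⟨hc, fun hmem => hnot (Submodule.subset_span hmem)⟩
      · rw [if_neg hfs]
        have hmem : v (m - (d : ℤ)) ∈ Submodule.span ℝ (v '' Set.Ioc (m - (d : ℤ)) m) := by
          apply Submodule.span_mono (Set.image_mono (f := v) ?_) (hf (m - (d : ℤ))).2.1
          intro x hx
          simp only [Set.mem_Ioc] at hx ⊢
          have := (hf (m - (d : ℤ))).1
          omega
        refine ⟨?_, hb, hc⟩
        rw [Set.image_insert_eq, Submodule.span_insert_eq_span hmem, ha]
  obtain ⟨ha, hb, hc⟩ := main n
  set F : Finset ℤ := (Finset.Ioc (m - (n : ℤ)) m).filter (fun i => m < f i) with hFdef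
  rw [hsp m] at ha
  have hF : v '' ↑F = ↑(F.image v) := (Finset.coe_image).symm
  rw [hF] at ha hb
  have hble : ⊤ ≤ Submodule.span ℝ
      (Set.range (fun x : (↑(F.image v) : Set (Fin k → ℝ)) => (x : Fin k → ℝ))) := by
    rw [Subtype.range_coe]; exact ha.le
  have hbasis : Module.Basis (F.image v) ℝ (Fin k → ℝ) := Module.Basis.mk hb hble
  have h1 := Module.finrank_eq_card_finset_basis hbasis
  rw [Module.finrank_fin_fun] at h1
  rw [Finset.card_image_of_injOn hc] at h1
  exact h1.symm

private lemma spbap_ub {k n : ℕ} (v : ℤ → Fin k → ℝ) (f : ℤ → ℤ)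
    (hf : IsSpanPerm v f)
    (hsp : ∀ m : ℤ, Submodule.span ℝ (v '' Set.Ioc (m - (n : ℤ)) m) = ⊤) :
    ∀ i : ℤ, f i ≤ i + (n : ℤ) := by
  intro i
  refine (hf i).2.2 (i + (n : ℤ)) (by omega) ?_
  have h1 := hsp (i + (n : ℤ))
  rw [add_sub_cancel_right] at h1
  rw [h1]
  trivial

private lemma spbap_fstep {k n : ℕ} (v : ℤ → Fin k → ℝ) (f : ℤ → ℤ)
    (hper : ∀ j : ℤ, v (j + (n : ℤ)) = v j) (hf : IsSpanPerm v f) :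
    ∀ i : ℤ, f (i + (n : ℤ)) = f i + (n : ℤ) := by
  intro i
  have h1 : f (i + (n : ℤ)) ≤ f i + (n : ℤ) := by
    refine (hf (i + (n : ℤ))).2.2 (f i + (n : ℤ)) (by have := (hf i).1; omega) ?_
    rw [spbap_shift v hper, hper]
    exact (hf i).2.1
  have h2 : f i ≤ f (i + (n : ℤ)) - (n : ℤ) := by
    have h3 := (hf (i + (n : ℤ))).2.1
    rw [hper] at h3
    have h4 := spbap_shift v hper i (f (i + (n : ℤ)) - (n : ℤ))
    rw [sub_add_cancel] at h4
    rw [h4] at h3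
    exact (hf i).2.2 _ (by have := (hf (i + (n : ℤ))).1; omega) h3
  omega

private lemma spbap_fper {k n : ℕ} (v : ℤ → Fin k → ℝ) (f : ℤ → ℤ)
    (hper : ∀ j : ℤ, v (j + (n : ℤ)) = v j) (hf : IsSpanPerm v f) :
    ∀ t : ℤ, ∀ i : ℤ, f (i + t * (n : ℤ)) = f i + t * (n : ℤ) := by
  have fstep := spbap_fstep v f hper hf
  intro t
  induction t using Int.induction_on with
  | zero => simp
  | succ t ih =>
    intro i
    have h1 : i + ((t : ℤ) + 1) * (n : ℤ) = (i + t * n) + n := by ring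
    rw [h1, fstep, ih]; ring
  | pred t ih =>
    intro i
    have h1 := fstep (i + (-(t : ℤ) - 1) * (n : ℤ))
    have h2 : i + (-(t : ℤ) - 1) * (n : ℤ) + (n : ℤ) = i + (-(t : ℤ)) * n := by ring
    rw [h2, ih] at h1
    omega

private lemma spbap_fdvd {k n : ℕ} (v : ℤ → Fin k → ℝ) (f : ℤ → ℤ)
    (hper : ∀ j : ℤ, v (j + (n : ℤ)) = v j) (hf : IsSpanPerm v f) :
    ∀ i j : ℤ, (n : ℤ) ∣ j - i → f j = f i + (j - i) := by
  intro i j ⟨t, ht⟩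
  have h1 := spbap_fper v f hper hf t i
  rw [mul_comm] at ht
  have h2 : i + t * (n : ℤ) = j := by omega
  rw [h2] at h1
  omega

private lemma spbap_inj {k : ℕ} (v : ℤ → Fin k → ℝ) (f : ℤ → ℤ)
    (hf : IsSpanPerm v f) : Function.Injective f := by
  have hkey : ∀ i j : ℤ, i < j → f i = f j → False := by
    intro i j hij heq
    have hjr : j ≤ f j := (hf j).1
    rcases eq_or_lt_of_le hjr with hjr' | hjr'
    · -- f j = j, so v j = 0
      have h1 := (hf j).2.1
      rw [← hjr'] at h1
      simp only [Set.Ioc_self, Set.image_empty, Submodule.span_empty,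
        Submodule.mem_bot] at h1
      have h2 := (hf i).2.1
      rw [heq, ← hjr'] at h2
      have hIoc : Set.Ioc i j = insert j (Set.Ioc i (j - 1)) := by
        ext x; simp only [Set.mem_Ioc, Set.mem_insert_iff]; omega
      rw [hIoc, Set.image_insert_eq, h1,
        Submodule.span_insert_eq_span (Submodule.zero_mem _)] at h2
      have := (hf i).2.2 (j - 1) (by omega) h2
      omega
    · -- j < f j
      have hnm : v j ∉ Submodule.span ℝ (v '' Set.Ioc j (f j - 1)) := by
        intro hmem
        have := (hf j).2.2 (f j - 1) (by omega) hmem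
        omega
      have hm := (hf j).2.1
      have hIoc : Set.Ioc j (f j) = insert (f j) (Set.Ioc j (f j - 1)) := by
        ext x; simp only [Set.mem_Ioc, Set.mem_insert_iff]; omega
      rw [hIoc, Set.image_insert_eq] at hm
      have hex := mem_span_insert_exchange hm hnm
      have hsub : insert (v j) (v '' Set.Ioc j (f j - 1)) ⊆ v '' Set.Ioc i (f j - 1) := by
        intro x hx
        rcases Set.mem_insert_iff.mp hx with rfl | ⟨y, hy, rfl⟩
        · exact ⟨j, by simp only [Set.mem_Ioc]; omega, rfl⟩
        · simp only [Set.mem_Ioc] at hy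
          exact ⟨y, by simp only [Set.mem_Ioc]; omega, rfl⟩
      have hex2 : v (f j) ∈ Submodule.span ℝ (v '' Set.Ioc i (f j - 1)) :=
        Submodule.span_mono hsub hex
      have h2 := (hf i).2.1
      rw [heq] at h2
      have hIoc2 : Set.Ioc i (f j) = insert (f j) (Set.Ioc i (f j - 1)) := by
        ext x; simp only [Set.mem_Ioc, Set.mem_insert_iff]; omega
      rw [hIoc2, Set.image_insert_eq, Submodule.span_insert_eq_span hex2] at h2
      have := (hf i).2.2 (f j - 1) (by omega) h2
      omega
  intro a b hab
  rcases lt_trichotomy a b with h | h | h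
  · exact absurd hab (fun h' => hkey a b h h')
  · exact h
  · exact absurd hab.symm (fun h' => hkey b a h h')

private lemma spbap_surj {k n : ℕ} (v : ℤ → Fin k → ℝ) (f : ℤ → ℤ)
    (hper : ∀ j : ℤ, v (j + (n : ℤ)) = v j) (hf : IsSpanPerm v f)
    (hsp : ∀ m : ℤ, Submodule.span ℝ (v '' Set.Ioc (m - (n : ℤ)) m) = ⊤) :
    Function.Surjective f := by
  classical
  have hinj := spbap_inj v f hf
  have fper := spbap_fper v f hper hf
  have hub := spbap_ub v f hf hsp
  rcases Nat.eq_zero_or_pos n with h0 | h0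
  · intro m
    refine ⟨m, ?_⟩
    have h1 := hub m
    have h2 := (hf m).1
    subst h0
    push_cast at h1
    omega
  · have hN : (0 : ℤ) < (n : ℤ) := by exact_mod_cast h0
    set N := (n : ℤ) with hNdef
    intro m
    set φ : ℤ → ℤ := fun i => (f i - 1) % N + 1 with hφ
    have hmap : ∀ i ∈ Finset.Icc (1 : ℤ) N, φ i ∈ Finset.Icc (1 : ℤ) N := by
      intro i _
      have := bound_repA hN (f i)
      simp only [Finset.mem_Icc]
      exact this
    have hinjOn : Set.InjOn φ ↑(Finset.Icc (1 : ℤ) N) := by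
      intro a ha b hb hab
      simp only [Finset.coe_Icc, Set.mem_Icc] at ha hb
      have h1 : (f a - 1) % N = (f b - 1) % N := by
        simpa [hφ] using hab
      have hd : N ∣ f a - f b := by
        have h2 := emod_eq_dvd h1
        have h3 : f a - 1 - (f b - 1) = f a - f b := by ring
        rwa [h3] at h2
      obtain ⟨t, ht⟩ := hd
      rw [mul_comm] at ht
      have h2 : f (b + t * N) = f a := by rw [fper t b]; omega
      have h3 : b + t * N = a := hinj h2
      refine window_eq (N := N) (c := 0) ⟨t, by rw [mul_comm]; omega⟩ (by omega) (by omega)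
        (by omega) (by omega)
    have himg : (Finset.Icc (1 : ℤ) N).image φ = Finset.Icc (1 : ℤ) N := by
      apply Finset.eq_of_subset_of_card_le
      · intro x hx
        obtain ⟨i, hi, rfl⟩ := Finset.mem_image.mp hx
        exact hmap i hi
      · rw [Finset.card_image_of_injOn hinjOn]
    have hm' : (m - 1) % N + 1 ∈ Finset.Icc (1 : ℤ) N := by
      simp only [Finset.mem_Icc]
      exact bound_repA hN m
    rw [← himg] at hm'
    obtain ⟨i, _, hφi⟩ := Finset.mem_image.mp hm'
    have hd : N ∣ m - f i := by
      have h1 : (f i - 1) % N = (m - 1) % N := by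
        simpa [hφ] using hφi
      have h2 := emod_eq_dvd h1
      have h2' := (dvd_neg.mpr h2)
      have h3 : -(f i - 1 - (m - 1)) = m - f i := by ring
      rwa [h3] at h2'
    obtain ⟨t, ht⟩ := hd
    rw [mul_comm] at ht
    exact ⟨i + t * N, by rw [fper t i]; omega⟩

private lemma spbap_sum {k n : ℕ} (v : ℤ → Fin k → ℝ) (f : ℤ → ℤ)
    (hper : ∀ j : ℤ, v (j + (n : ℤ)) = v j) (hf : IsSpanPerm v f)
    (hsp : ∀ m : ℤ, Submodule.span ℝ (v '' Set.Ioc (m - (n : ℤ)) m) = ⊤) :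
    (∑ i ∈ Finset.Icc (1 : ℤ) (n : ℤ), (f i - i)) = (k : ℤ) * (n : ℤ) := by
  classical
  rcases Nat.eq_zero_or_pos n with h0 | h0
  · subst h0
    have hE : Finset.Icc (1 : ℤ) ((0 : ℕ) : ℤ) = ∅ := by
      apply Finset.Icc_eq_empty; norm_num
    rw [hE]; simp
  have hN : (0 : ℤ) < (n : ℤ) := by exact_mod_cast h0
  have hub := spbap_ub v f hf hsp
  have fdvd := spbap_fdvd v f hper hf
  set P : ℤ → ℤ → Prop :=
    fun i mm => ∃ t : ℤ, i ≤ mm + t * (n : ℤ) ∧ mm + t * (n : ℤ) < f i with hP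
  have step1 : ∀ i : ℤ,
      f i - i = (((Finset.Icc (1 : ℤ) (n : ℤ)).filter (fun mm => P i mm)).card : ℤ) := by
    intro i
    have hbij : (Finset.Ico i (f i)).card
        = ((Finset.Icc (1 : ℤ) (n : ℤ)).filter (fun mm => P i mm)).card := by
      refine Finset.card_bij (fun x _ => (x - 1) % (n : ℤ) + 1) ?_ ?_ ?_
      · intro x hx
        simp only [Finset.mem_Ico] at hx
        simp only [Finset.mem_filter, Finset.mem_Icc]
        refine ⟨bound_repA hN x, ?_⟩
        refine ⟨(x - 1) / (n : ℤ), ?_, ?_⟩ <;>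
        · have h5 : (x - 1) % (n : ℤ) + (n : ℤ) * ((x - 1) / (n : ℤ)) = x - 1 :=
            Int.emod_add_mul_ediv _ _
          have h6 : ((x - 1) / (n : ℤ)) * (n : ℤ) = (n : ℤ) * ((x - 1) / (n : ℤ)) := by ring
          omega
      · intro x hx y hy hxy
        simp only [Finset.mem_Ico] at hx hy
        have hxy' : (x - 1) % (n : ℤ) + 1 = (y - 1) % (n : ℤ) + 1 := hxy
        have hd : (n : ℤ) ∣ x - y := by
          have h1 : (x - 1) % (n : ℤ) = (y - 1) % (n : ℤ) := by omega
          have h2 := emod_eq_dvd h1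
          have h3 : x - 1 - (y - 1) = x - y := by ring
          rwa [h3] at h2
        have hub' := hub i
        exact window_eq (c := i - 1) hd (by omega) (by omega) (by omega) (by omega)
      · intro mm hmm
        simp only [Finset.mem_filter, Finset.mem_Icc] at hmm
        obtain ⟨⟨hm1, hm2⟩, t, ht1, ht2⟩ := hmm
        refine ⟨mm + t * (n : ℤ), Finset.mem_Ico.mpr ⟨ht1, ht2⟩, ?_⟩
        show (mm + t * (n : ℤ) - 1) % (n : ℤ) + 1 = mm
        have h1 : mm + t * (n : ℤ) - 1 = mm - 1 + t * (n : ℤ) := by ring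
        rw [h1, Int.add_mul_emod_self_right, Int.emod_eq_of_lt (by omega) (by omega)]
        omega
    have hcard : (Finset.Ico i (f i)).card = (f i - i).toNat := Int.card_Ico _ _
    rw [← hbij, hcard]
    have := (hf i).1
    omega
  have hfix : ∀ mm ∈ Finset.Icc (1 : ℤ) (n : ℤ),
      ((Finset.Icc (1 : ℤ) (n : ℤ)).filter (fun i => P i mm)).card = k := by
    intro mm hmm
    simp only [Finset.mem_Icc] at hmm
    rw [← spbap_card v f hf hsp mm]
    refine Finset.card_bij' (fun i _ => mm - (mm - i) % (n : ℤ))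
      (fun j _ => (j - 1) % (n : ℤ) + 1) ?_ ?_ ?_ ?_
    · intro i hi
      simp only [Finset.mem_filter, Finset.mem_Icc] at hi
      obtain ⟨⟨hi1, hi2⟩, t, ht1, ht2⟩ := hi
      have hB := bound_repC hN i mm
      have hdC := dvd_repC (n : ℤ) i mm
      have hdt : (n : ℤ) ∣ (mm - (mm - i) % (n : ℤ)) - (i - t * (n : ℤ)) := by
        refine dvd_trans_sub hdC ?_
        exact ⟨t, by ring⟩
      have hfi' : f (i - t * (n : ℤ)) = f i + ((i - t * (n : ℤ)) - i) :=
        fdvd i (i - t * (n : ℤ)) ⟨-t, by ring⟩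
      have hub' := hub (i - t * (n : ℤ))
      have heq : mm - (mm - i) % (n : ℤ) = i - t * (n : ℤ) :=
        window_eq (c := mm - (n : ℤ)) hdt hB.1 (by omega) (by omega) (by omega)
      simp only [Finset.mem_filter, Finset.mem_Ioc]
      refine ⟨⟨hB.1, hB.2⟩, ?_⟩
      rw [heq, hfi']
      omega
    · intro j hj
      simp only [Finset.mem_filter, Finset.mem_Ioc] at hj
      obtain ⟨⟨hj1, hj2⟩, hj3⟩ := hj
      have hB := bound_repA hN j
      have hdA := dvd_repA (n : ℤ) j
      simp only [Finset.mem_filter, Finset.mem_Icc]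
      refine ⟨⟨hB.1, hB.2⟩, ?_⟩
      obtain ⟨s, hs⟩ := hdA
      have hfd : f ((j - 1) % (n : ℤ) + 1) = f j + (((j - 1) % (n : ℤ) + 1) - j) :=
        fdvd j _ ⟨s, hs⟩
      refine ⟨s, ?_, ?_⟩ <;>
      · have hq : s * (n : ℤ) = (n : ℤ) * s := by ring
        omega
    · intro i hi
      simp only [Finset.mem_filter, Finset.mem_Icc] at hi
      show (mm - (mm - i) % (n : ℤ) - 1) % (n : ℤ) + 1 = i
      have hB := bound_repC hN i mm
      have h1 := dvd_repA (n : ℤ) (mm - (mm - i) % (n : ℤ))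
      have h2 := dvd_repC (n : ℤ) i mm
      have hB2 := bound_repA hN (mm - (mm - i) % (n : ℤ))
      exact window_eq (c := 0) (dvd_trans_sub h1 h2) (by omega) (by omega) (by omega) (by omega)
    · intro j hj
      simp only [Finset.mem_filter, Finset.mem_Ioc] at hj
      show mm - (mm - ((j - 1) % (n : ℤ) + 1)) % (n : ℤ) = j
      have hB := bound_repA hN j
      have h1 := dvd_repC (n : ℤ) ((j - 1) % (n : ℤ) + 1) mm
      have h2 := dvd_repA (n : ℤ) j
      have hB2 := bound_repC hN ((j - 1) % (n : ℤ) + 1) mm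
      exact window_eq (c := mm - (n : ℤ)) (dvd_trans_sub h1 h2) (by omega) (by omega)
        (by omega) (by omega)
  have hswap : (∑ i ∈ Finset.Icc (1 : ℤ) (n : ℤ),
        ((Finset.Icc (1 : ℤ) (n : ℤ)).filter (fun mm => P i mm)).card)
      = ∑ mm ∈ Finset.Icc (1 : ℤ) (n : ℤ),
        ((Finset.Icc (1 : ℤ) (n : ℤ)).filter (fun i => P i mm)).card := by
    simp_rw [Finset.card_filter]
    exact Finset.sum_comm
  have htot : (∑ i ∈ Finset.Icc (1 : ℤ) (n : ℤ),
      ((Finset.Icc (1 : ℤ) (n : ℤ)).filter (fun mm => P i mm)).card) = k * n := by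
    rw [hswap, Finset.sum_congr rfl hfix, Finset.sum_const, smul_eq_mul]
    rw [Int.card_Icc]
    have h7 : ((n : ℤ) + 1 - 1).toNat = n := by omega
    rw [h7, Nat.mul_comm]
  calc (∑ i ∈ Finset.Icc (1 : ℤ) (n : ℤ), (f i - i))
      = ∑ i ∈ Finset.Icc (1 : ℤ) (n : ℤ),
          (((Finset.Icc (1 : ℤ) (n : ℤ)).filter (fun mm => P i mm)).card : ℤ) :=
        Finset.sum_congr rfl (fun i _ => step1 i)
    _ = ((∑ i ∈ Finset.Icc (1 : ℤ) (n : ℤ),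
          ((Finset.Icc (1 : ℤ) (n : ℤ)).filter (fun mm => P i mm)).card : ℕ) : ℤ) := by
        push_cast; ring
    _ = ((k * n : ℕ) : ℤ) := by rw [htot]
    _ = (k : ℤ) * (n : ℤ) := by push_cast; ring

/-- The span-permutation of a real `k×n` matrix of rank `k` is a bounded
affine permutation of type `(k,n)`. -/
theorem spanPerm_isBAP (n k : ℕ) (v : ℤ → Fin k → ℝ)
    (hper : ∀ j : ℤ, v (j + (n : ℤ)) = v j)
    (hrank : Submodule.span ℝ (v '' Set.Icc (1 : ℤ) (n : ℤ)) = ⊤)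
    (f : ℤ → ℤ) (hf : IsSpanPerm v f) :
    IsBAP n k f := by
  have hsp := spbap_span_top v hper hrank
  exact ⟨⟨spbap_inj v f hf, spbap_surj v f hper hf hsp⟩, spbap_fstep v f hper hf,
    fun i => ⟨(hf i).1, spbap_ub v f hf hsp i⟩, spbap_sum v f hper hf hsp⟩
end

section
/- Let M be a real n×2n matrix that is Plücker-symmetric, let i ∈ [2n−1] with i ≠ n, and let c ∈ ℝ. Then M·x_i(c)·x_{2n−i}(c) is Plücker-symmetric. -/
section AuxiliaryLemmas

open Finset Matrix

private lemma Delta_congr' {k : ℕ} {v w : ℤ → Fin k → ℝ} {I : Finset ℤ}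
    (h : ∀ x ∈ I, w x = v x) : Delta w I = Delta v I := by
  unfold Delta
  split
  · congr 1; ext r c
    exact congrFun (h _ (Finset.coe_mem _)) r
  · rfl

private lemma Delta_of_card_ne {k : ℕ} (v : ℤ → Fin k → ℝ) {I : Finset ℤ}
    (h : I.card ≠ k) : Delta v I = 0 := dif_neg h

private lemma Delta_eq_det {k : ℕ} (v : ℤ → Fin k → ℝ) (I : Finset ℤ) (hI : I.card = k) :
    Delta v I = Matrix.det (Matrix.of fun r cc : Fin k => v (I.orderEmbOfFin hI cc) r) := by
  rw [Delta, dif_pos hI]; rfl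

private lemma int_eq_zero_of_mod {N a : ℤ} (h1 : -N < a) (h2 : a < N) (h : a % N = 0) :
    a = 0 := by
  obtain ⟨t, rfl⟩ := Int.dvd_of_emod_eq_zero h
  rcases lt_trichotomy t 0 with ht | rfl | ht
  · nlinarith
  · ring
  · nlinarith

private lemma Delta_bridge {k : ℕ} (v w : ℤ → Fin k → ℝ) (I : Finset ℤ) (hI : I.card = k)
    (j : ℤ) (c : ℝ)
    (hw : ∀ x ∈ I, x ≠ j → w x = v x) (hwj : w j = v j + c • v (j - 1)) :
    Delta w I = Delta v I +
      (if j ∈ I then c * Delta v (insert (j - 1) (I.erase j)) else 0) := by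
  by_cases hj : j ∈ I
  · rw [if_pos hj]
    have hk : 0 < k := by rw [← hI]; exact card_pos.2 ⟨j, hj⟩
    have hσmem : ∀ a, I.orderEmbOfFin hI a ∈ I := fun a => I.orderEmbOfFin_mem hI a
    obtain ⟨c₀, hc₀⟩ : ∃ a, I.orderEmbOfFin hI a = j := by
      have h1 : j ∈ Set.range (I.orderEmbOfFin hI) := by
        rw [I.range_orderEmbOfFin hI]; exact_mod_cast hj
      exact h1
    have hDw : Delta w I =
        Matrix.det ((Matrix.of fun r cc : Fin k => v (I.orderEmbOfFin hI cc) r).updateCol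
          c₀ (w j)) := by
      rw [Delta_eq_det w I hI]
      refine congrArg Matrix.det (Matrix.ext fun r cc => ?_)
      by_cases hcc : cc = c₀
      · subst hcc
        rw [Matrix.updateCol_self, Matrix.of_apply, hc₀]
      · rw [Matrix.updateCol_ne hcc, Matrix.of_apply, Matrix.of_apply]
        have hne : I.orderEmbOfFin hI cc ≠ j := by
          rw [← hc₀]; exact fun h => hcc ((I.orderEmbOfFin hI).injective h)
        exact congrFun (hw _ (hσmem cc) hne) r
    rw [hDw, hwj, Matrix.det_updateCol_add, Matrix.det_updateCol_smul]
    have h1 : (Matrix.of fun r cc : Fin k => v (I.orderEmbOfFin hI cc) r).updateCol c₀ (v j)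
        = (Matrix.of fun r cc : Fin k => v (I.orderEmbOfFin hI cc) r) := by
      ext r cc
      by_cases hcc : cc = c₀
      · subst hcc; rw [Matrix.updateCol_self, Matrix.of_apply, hc₀]
      · rw [Matrix.updateCol_ne hcc]
    rw [h1, ← Delta_eq_det v I hI]
    congr 1
    by_cases hj1 : j - 1 ∈ I
    · obtain ⟨c₁, hc₁⟩ : ∃ a, I.orderEmbOfFin hI a = j - 1 := by
        have h1 : j - 1 ∈ Set.range (I.orderEmbOfFin hI) := by
          rw [I.range_orderEmbOfFin hI]; exact_mod_cast hj1
        exact h1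
      have hne : c₁ ≠ c₀ := by
        intro h; rw [h, hc₀] at hc₁; omega
      have hz : Matrix.det ((Matrix.of fun r cc : Fin k =>
          v (I.orderEmbOfFin hI cc) r).updateCol c₀ (v (j-1))) = 0 := by
        apply Matrix.det_zero_of_column_eq hne
        intro r
        rw [Matrix.updateCol_ne hne, Matrix.updateCol_self, Matrix.of_apply, hc₁]
      rw [hz]
      have he : insert (j-1) (I.erase j) = I.erase j := by
        apply insert_eq_self.2
        exact mem_erase.2 ⟨by omega, hj1⟩
      rw [he, Delta_of_card_ne]
      rw [card_erase_of_mem hj, hI]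
      omega
    · have hje : j - 1 ∉ I.erase j := fun h => hj1 (mem_of_mem_erase h)
      have hI' : (insert (j-1) (I.erase j)).card = k := by
        rw [card_insert_of_notMem hje, card_erase_of_mem hj, hI]
        omega
      have hτ : (fun a => if a = c₀ then j - 1 else I.orderEmbOfFin hI a)
          = (insert (j-1) (I.erase j)).orderEmbOfFin hI' := by
        apply orderEmbOfFin_unique
        · intro a
          by_cases ha : a = c₀
          · simp [ha]
          · rw [if_neg ha]
            refine mem_insert_of_mem (mem_erase.2 ⟨?_, hσmem a⟩)
            rw [← hc₀]; exact fun h => ha ((I.orderEmbOfFin hI).injective h)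
        · intro a b hab
          dsimp only
          by_cases ha : a = c₀ <;> by_cases hb : b = c₀
          · exact absurd (ha.trans hb.symm) (ne_of_lt hab)
          · rw [if_pos ha, if_neg hb]
            have h2 : I.orderEmbOfFin hI a < I.orderEmbOfFin hI b :=
              (I.orderEmbOfFin hI).strictMono hab
            rw [ha, hc₀] at h2
            have h3 : I.orderEmbOfFin hI b ≠ j - 1 := fun h => hj1 (h ▸ hσmem b)
            omega
          · rw [if_neg ha, if_pos hb]
            have h2 : I.orderEmbOfFin hI a < I.orderEmbOfFin hI b :=
              (I.orderEmbOfFin hI).strictMono hab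
            rw [hb, hc₀] at h2
            have h3 : I.orderEmbOfFin hI a ≠ j - 1 := fun h => hj1 (h ▸ hσmem a)
            omega
          · rw [if_neg ha, if_neg hb]
            exact (I.orderEmbOfFin hI).strictMono hab
      rw [Delta_eq_det v _ hI']
      congr 1
      refine congrArg Matrix.det (Matrix.ext fun r cc => ?_)
      rw [Matrix.of_apply, ← hτ]
      dsimp only
      by_cases hcc : cc = c₀
      · subst hcc; rw [Matrix.updateCol_self, if_pos rfl]
      · rw [Matrix.updateCol_ne hcc, if_neg hcc, Matrix.of_apply]
  · rw [if_neg hj, add_zero]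
    exact Delta_congr' fun x hx => hw x hx (fun h => hj (h ▸ hx))

private lemma mem_Rset {n : ℕ} {I : Finset ℤ} {x : ℤ} :
    x ∈ Rset n I ↔ x ∈ Finset.Icc (1:ℤ) (2*(n:ℤ)) ∧ 2*(n:ℤ)+1-x ∉ I := by
  unfold Rset
  rw [mem_sdiff]
  constructor
  · rintro ⟨h1, h2⟩
    exact ⟨h1, fun h => h2 (mem_image.2 ⟨_, h, by ring⟩)⟩
  · rintro ⟨h1, h2⟩
    refine ⟨h1, fun h => ?_⟩
    obtain ⟨y, hy, hxy⟩ := mem_image.1 h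
    have hyx : y = 2*(n:ℤ)+1-x := by omega
    exact h2 (hyx ▸ hy)

private lemma Rset_card {n : ℕ} {I : Finset ℤ} (hsub : I ⊆ Finset.Icc (1:ℤ) (2*(n:ℤ)))
    (h : I.card = n) : (Rset n I).card = n := by
  have himg : (I.image fun x => 2*(n:ℤ)+1-x) ⊆ Finset.Icc 1 (2*(n:ℤ)) := by
    intro x hx
    obtain ⟨y, hy, rfl⟩ := mem_image.1 hx
    have hb := mem_Icc.1 (hsub hy)
    rw [mem_Icc]; omega
  have hcard : (I.image fun x => 2*(n:ℤ)+1-x).card = n := by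
    rw [Finset.card_image_of_injective _ (fun a b hab => by omega), h]
  unfold Rset
  rw [card_sdiff_of_subset himg, hcard, Int.card_Icc]
  omega

private lemma Rset_replace {n : ℕ} {I : Finset ℤ} (hsub : I ⊆ Finset.Icc (1:ℤ) (2*(n:ℤ)))
    {a b : ℤ} (haI : a ∉ I) (hbI : b ∈ I) (ha : a ∈ Finset.Icc (1:ℤ) (2*(n:ℤ))) :
    Rset n (insert a (I.erase b)) =
      insert (2*(n:ℤ)+1-b) ((Rset n I).erase (2*(n:ℤ)+1-a)) := by
  have hb := mem_Icc.1 (hsub hbI)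
  have haIcc := mem_Icc.1 ha
  ext x
  simp only [mem_Rset, mem_insert, mem_erase, mem_Icc]
  by_cases hxb : x = 2*(n:ℤ)+1-b
  · subst hxb
    have hab : a ≠ b := fun h => haI (h ▸ hbI)
    constructor
    · intro _; left; rfl
    · intro _
      refine ⟨⟨by omega, by omega⟩, ?_⟩
      rintro (h | ⟨h1, _⟩)
      · exact hab (by omega)
      · exact h1 (by ring)
  · have hxb' : 2*(n:ℤ)+1-x ≠ b := fun h => hxb (by omega)
    constructor
    · rintro ⟨hx, h2⟩
      push_neg at h2
      exact Or.inr ⟨fun h => h2.1 (by omega), hx, h2.2 hxb'⟩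
    · rintro (h | ⟨hxa, hx, hP⟩)
      · exact absurd h hxb
      · refine ⟨hx, ?_⟩
        rintro (h | ⟨_, hPI⟩)
        · exact hxa (by omega)
        · exact hP hPI

end AuxiliaryLemmas

/-- If the `n×2n` matrix `M` is Plücker-symmetric and `i ∈ [2n-1]`, `i ≠ n`,
then `M·xᵢ(c)·x_{2n-i}(c)` is Plücker-symmetric. -/
theorem pluckerSymmetric_mul_bridge_pair (n : ℕ) (v : ℤ → Fin n → ℝ)
    (hper : ∀ j : ℤ, v (j + 2 * (n : ℤ)) = v j)
    (hsym : PSym n v) (i : ℤ) (hi1 : 1 ≤ i) (hi2 : i ≤ 2 * (n : ℤ) - 1)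
    (hne : i ≠ (n : ℤ)) (c : ℝ) :
    PSym n (bridgeCol (2 * n) (2 * (n : ℤ) - i) c (bridgeCol (2 * n) i c v)) := by
  have hn : 1 ≤ (n:ℤ) := by omega
  have hcast : ((2*n : ℕ) : ℤ) = 2*(n:ℤ) := by push_cast; ring
  set u : ℤ → Fin n → ℝ := bridgeCol (2 * n) i c v with hu
  set w : ℤ → Fin n → ℝ := bridgeCol (2 * n) (2 * (n : ℤ) - i) c u with hwdef
  obtain ⟨j₁, hj₁⟩ : ∃ j, j = i + 1 := ⟨_, rfl⟩
  obtain ⟨j₂, hj₂⟩ : ∃ j, j = 2*(n:ℤ) + 1 - i := ⟨_, rfl⟩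
  have hmodz : ∀ a b : ℤ, 1 ≤ a → a ≤ 2*(n:ℤ) → 1 ≤ b → b ≤ 2*(n:ℤ) → a ≠ b →
      ¬ ((a - b) % ((2*n:ℕ):ℤ) = 0) := by
    intro a b h1 h2 h3 h4 hne' h
    rw [hcast] at h
    have := int_eq_zero_of_mod (by omega) (by omega) h
    omega
  have huj₁ : u j₁ = v j₁ + c • v (j₁ - 1) := by
    have hz : (j₁ - (i+1)) % ((2*n:ℕ):ℤ) = 0 := by
      have : j₁ - (i+1) = 0 := by omega
      rw [this]; simp
    show (if (j₁ - (i+1)) % ((2*n:ℕ):ℤ) = 0 then v j₁ + c • v (j₁-1) else v j₁) = _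
    rw [if_pos hz]
  have hu_eq : ∀ x, x ∈ Finset.Icc (1:ℤ) (2*(n:ℤ)) → x ≠ j₁ → u x = v x := by
    intro x hx hxne
    have hxb := Finset.mem_Icc.1 hx
    show (if (x - (i+1)) % ((2*n:ℕ):ℤ) = 0 then v x + c • v (x-1) else v x) = v x
    rw [if_neg (hmodz x (i+1) (by omega) (by omega) (by omega) (by omega) (by omega))]
  have hwj₂ : w j₂ = u j₂ + c • u (j₂ - 1) := by
    have hz : (j₂ - (2*(n:ℤ) - i + 1)) % ((2*n:ℕ):ℤ) = 0 := by
      have : j₂ - (2*(n:ℤ) - i + 1) = 0 := by omega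
      rw [this]; simp
    show (if (j₂ - (2*(n:ℤ) - i + 1)) % ((2*n:ℕ):ℤ) = 0 then u j₂ + c • u (j₂-1) else u j₂) = _
    rw [if_pos hz]
  have hw_eq : ∀ x, x ∈ Finset.Icc (1:ℤ) (2*(n:ℤ)) → x ≠ j₂ → w x = u x := by
    intro x hx hxne
    have hxb := Finset.mem_Icc.1 hx
    show (if (x - (2*(n:ℤ) - i + 1)) % ((2*n:ℕ):ℤ) = 0 then u x + c • u (x-1) else u x) = u x
    rw [if_neg (hmodz x (2*(n:ℤ) - i + 1) (by omega) (by omega) (by omega) (by omega)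
      (by omega))]
  have expand : ∀ J, J ⊆ Finset.Icc (1:ℤ) (2*(n:ℤ)) → J.card = n →
      Delta w J = (Delta v J
          + (if j₁ ∈ J then c * Delta v (insert (j₁-1) (J.erase j₁)) else 0))
        + ((if j₂ ∈ J then c * Delta v (insert (j₂-1) (J.erase j₂)) else 0)
          + (if j₁ ∈ J ∧ j₂ ∈ J ∧ j₁-1 ∉ J ∧ j₂-1 ∉ J then
              c * (c * Delta v (insert (j₁-1) ((insert (j₂-1) (J.erase j₂)).erase j₁)))
            else 0)) := by
    intro J hJsub hJcard
    have h1 : Delta w J = Delta u J +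
        (if j₂ ∈ J then c * Delta u (insert (j₂-1) (J.erase j₂)) else 0) :=
      Delta_bridge u w J hJcard j₂ c (fun x hx hxne => hw_eq x (hJsub hx) hxne) hwj₂
    have h2 : Delta u J = Delta v J +
        (if j₁ ∈ J then c * Delta v (insert (j₁-1) (J.erase j₁)) else 0) :=
      Delta_bridge v u J hJcard j₁ c (fun x hx hxne => hu_eq x (hJsub hx) hxne) huj₁
    rw [h1, h2]
    congr 1
    by_cases hj2 : j₂ ∈ J
    · rw [if_pos hj2, if_pos hj2]
      by_cases hj2' : j₂ - 1 ∈ J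
      · have hcol : insert (j₂-1) (J.erase j₂) = J.erase j₂ :=
          Finset.insert_eq_self.2 (Finset.mem_erase.2 ⟨by omega, hj2'⟩)
        have hcard0 : (J.erase j₂).card ≠ n := by
          rw [Finset.card_erase_of_mem hj2, hJcard]; omega
        rw [if_neg (by tauto), hcol, Delta_of_card_ne u hcard0, Delta_of_card_ne v hcard0]
        ring
      · have hJ₂card : (insert (j₂-1) (J.erase j₂)).card = n := by
          rw [Finset.card_insert_of_notMem (fun h => hj2' (Finset.mem_of_mem_erase h)),
            Finset.card_erase_of_mem hj2, hJcard]
          omega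
        have hJ₂sub : insert (j₂-1) (J.erase j₂) ⊆ Finset.Icc (1:ℤ) (2*(n:ℤ)) := by
          intro x hx
          rcases Finset.mem_insert.1 hx with rfl | hx'
          · have := Finset.mem_Icc.1 (hJsub hj2)
            rw [Finset.mem_Icc]; omega
          · exact hJsub (Finset.mem_of_mem_erase hx')
        have h3 : Delta u (insert (j₂-1) (J.erase j₂)) =
            Delta v (insert (j₂-1) (J.erase j₂)) +
            (if j₁ ∈ insert (j₂-1) (J.erase j₂) then
              c * Delta v (insert (j₁-1) ((insert (j₂-1) (J.erase j₂)).erase j₁)) else 0) :=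
          Delta_bridge v u _ hJ₂card j₁ c (fun x hx hxne => hu_eq x (hJ₂sub hx) hxne) huj₁
        rw [h3]
        have hj1mem : j₁ ∈ insert (j₂-1) (J.erase j₂) ↔ j₁ ∈ J := by
          simp only [Finset.mem_insert, Finset.mem_erase]
          constructor
          · rintro (h | ⟨_, h⟩)
            · omega
            · exact h
          · intro h; exact Or.inr ⟨by omega, h⟩
        by_cases hj1 : j₁ ∈ J
        · rw [if_pos (hj1mem.2 hj1)]
          by_cases hi' : j₁ - 1 ∈ J
          · have himem : j₁ - 1 ∈ (insert (j₂-1) (J.erase j₂)).erase j₁ := by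
              rw [Finset.mem_erase, Finset.mem_insert, Finset.mem_erase]
              exact ⟨by omega, Or.inr ⟨by omega, hi'⟩⟩
            have hcol : insert (j₁-1) ((insert (j₂-1) (J.erase j₂)).erase j₁)
                = (insert (j₂-1) (J.erase j₂)).erase j₁ :=
              Finset.insert_eq_self.2 himem
            have hc0 : ((insert (j₂-1) (J.erase j₂)).erase j₁).card ≠ n := by
              rw [Finset.card_erase_of_mem (hj1mem.2 hj1), hJ₂card]; omega
            rw [if_neg (by tauto), hcol, Delta_of_card_ne v hc0]
            ring
          · rw [if_pos ⟨hj1, hj2, hi', hj2'⟩]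
            ring
        · rw [if_neg (fun h => hj1 (hj1mem.1 h)), if_neg (by tauto)]
          ring
    · rw [if_neg hj2, if_neg hj2, if_neg (by tauto)]
      ring
  intro I hIsub hIcard
  have hKsub : Rset n I ⊆ Finset.Icc (1:ℤ) (2*(n:ℤ)) := Finset.sdiff_subset
  have hKcard : (Rset n I).card = n := Rset_card hIsub hIcard
  have hmem : ∀ x : ℤ, 1 ≤ x → x ≤ 2*(n:ℤ) → (x ∈ Rset n I ↔ 2*(n:ℤ)+1-x ∉ I) := by
    intro x h1 h2
    rw [mem_Rset, Finset.mem_Icc]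
    tauto
  have hm1 : j₁ ∈ Rset n I ↔ j₂ - 1 ∉ I := by
    rw [hmem j₁ (by omega) (by omega)]
    have e : 2*(n:ℤ)+1-j₁ = j₂-1 := by omega
    rw [e]
  have hm1' : j₁ - 1 ∈ Rset n I ↔ j₂ ∉ I := by
    rw [hmem (j₁-1) (by omega) (by omega)]
    have e : 2*(n:ℤ)+1-(j₁-1) = j₂ := by omega
    rw [e]
  have hm2 : j₂ ∈ Rset n I ↔ j₁ - 1 ∉ I := by
    rw [hmem j₂ (by omega) (by omega)]
    have e : 2*(n:ℤ)+1-j₂ = j₁-1 := by omega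
    rw [e]
  have hm2' : j₂ - 1 ∈ Rset n I ↔ j₁ ∉ I := by
    rw [hmem (j₂-1) (by omega) (by omega)]
    have e : 2*(n:ℤ)+1-(j₂-1) = j₁ := by omega
    rw [e]
  have eq1 : (if j₁ ∈ Rset n I then c * Delta v (insert (j₁-1) ((Rset n I).erase j₁)) else 0)
      = (if j₂ ∈ I then c * Delta v (insert (j₂-1) (I.erase j₂)) else 0) := by
    by_cases h2 : j₂ ∈ I
    · by_cases h2' : j₂ - 1 ∈ I
      · rw [if_neg (fun h => (hm1.1 h) h2'), if_pos h2]
        have hcol : insert (j₂-1) (I.erase j₂) = I.erase j₂ :=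
          Finset.insert_eq_self.2 (Finset.mem_erase.2 ⟨by omega, h2'⟩)
        rw [hcol, Delta_of_card_ne v (by rw [Finset.card_erase_of_mem h2, hIcard]; omega)]
        ring
      · rw [if_pos (hm1.2 h2'), if_pos h2]
        have hI₂sub : insert (j₂-1) (I.erase j₂) ⊆ Finset.Icc (1:ℤ) (2*(n:ℤ)) := by
          intro x hx
          rcases Finset.mem_insert.1 hx with rfl | hx'
          · rw [Finset.mem_Icc]; omega
          · exact hIsub (Finset.mem_of_mem_erase hx')
        have hI₂card : (insert (j₂-1) (I.erase j₂)).card = n := by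
          rw [Finset.card_insert_of_notMem (fun h => h2' (Finset.mem_of_mem_erase h)),
            Finset.card_erase_of_mem h2, hIcard]
          omega
        have hrepl := Rset_replace hIsub h2' h2 (by rw [Finset.mem_Icc]; omega)
        have e1 : 2*(n:ℤ)+1-j₂ = j₁-1 := by omega
        have e2 : 2*(n:ℤ)+1-(j₂-1) = j₁ := by omega
        rw [e1, e2] at hrepl
        have hs := hsym _ hI₂sub hI₂card
        rw [hrepl] at hs
        rw [hs]
    · by_cases h2' : j₂ - 1 ∈ I
      · rw [if_neg (fun h => (hm1.1 h) h2'), if_neg h2]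
      · rw [if_pos (hm1.2 h2'), if_neg h2]
        have hmemi : j₁ - 1 ∈ (Rset n I).erase j₁ :=
          Finset.mem_erase.2 ⟨by omega, hm1'.2 h2⟩
        rw [Finset.insert_eq_self.2 hmemi, Delta_of_card_ne v
          (by rw [Finset.card_erase_of_mem (hm1.2 h2'), hKcard]; omega)]
        ring
  have eq2 : (if j₂ ∈ Rset n I then c * Delta v (insert (j₂-1) ((Rset n I).erase j₂)) else 0)
      = (if j₁ ∈ I then c * Delta v (insert (j₁-1) (I.erase j₁)) else 0) := by
    by_cases h1 : j₁ ∈ I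
    · by_cases h1' : j₁ - 1 ∈ I
      · rw [if_neg (fun h => (hm2.1 h) h1'), if_pos h1]
        have hcol : insert (j₁-1) (I.erase j₁) = I.erase j₁ :=
          Finset.insert_eq_self.2 (Finset.mem_erase.2 ⟨by omega, h1'⟩)
        rw [hcol, Delta_of_card_ne v (by rw [Finset.card_erase_of_mem h1, hIcard]; omega)]
        ring
      · rw [if_pos (hm2.2 h1'), if_pos h1]
        have hI₁sub : insert (j₁-1) (I.erase j₁) ⊆ Finset.Icc (1:ℤ) (2*(n:ℤ)) := by
          intro x hx
          rcases Finset.mem_insert.1 hx with rfl | hx'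
          · rw [Finset.mem_Icc]; omega
          · exact hIsub (Finset.mem_of_mem_erase hx')
        have hI₁card : (insert (j₁-1) (I.erase j₁)).card = n := by
          rw [Finset.card_insert_of_notMem (fun h => h1' (Finset.mem_of_mem_erase h)),
            Finset.card_erase_of_mem h1, hIcard]
          omega
        have hrepl := Rset_replace hIsub h1' h1 (by rw [Finset.mem_Icc]; omega)
        have e1 : 2*(n:ℤ)+1-j₁ = j₂-1 := by omega
        have e2 : 2*(n:ℤ)+1-(j₁-1) = j₂ := by omega
        rw [e1, e2] at hrepl
        have hs := hsym _ hI₁sub hI₁card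
        rw [hrepl] at hs
        rw [hs]
    · by_cases h1' : j₁ - 1 ∈ I
      · rw [if_neg (fun h => (hm2.1 h) h1'), if_neg h1]
      · rw [if_pos (hm2.2 h1'), if_neg h1]
        have hmemi : j₂ - 1 ∈ (Rset n I).erase j₂ :=
          Finset.mem_erase.2 ⟨by omega, hm2'.2 h1⟩
        rw [Finset.insert_eq_self.2 hmemi, Delta_of_card_ne v
          (by rw [Finset.card_erase_of_mem (hm2.2 h1'), hKcard]; omega)]
        ring
  have hcond : (j₁ ∈ Rset n I ∧ j₂ ∈ Rset n I ∧ j₁-1 ∉ Rset n I ∧ j₂-1 ∉ Rset n I)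
      ↔ (j₁ ∈ I ∧ j₂ ∈ I ∧ j₁-1 ∉ I ∧ j₂-1 ∉ I) := by
    rw [hm1, hm2, not_iff_not.2 hm1', not_iff_not.2 hm2']
    tauto
  have eq3 : (if j₁ ∈ Rset n I ∧ j₂ ∈ Rset n I ∧ j₁-1 ∉ Rset n I ∧ j₂-1 ∉ Rset n I then
        c * (c * Delta v (insert (j₁-1) ((insert (j₂-1) ((Rset n I).erase j₂)).erase j₁)))
      else 0)
      = (if j₁ ∈ I ∧ j₂ ∈ I ∧ j₁-1 ∉ I ∧ j₂-1 ∉ I then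
        c * (c * Delta v (insert (j₁-1) ((insert (j₂-1) (I.erase j₂)).erase j₁)))
      else 0) := by
    by_cases hc4 : j₁ ∈ I ∧ j₂ ∈ I ∧ j₁-1 ∉ I ∧ j₂-1 ∉ I
    · rw [if_pos (hcond.2 hc4), if_pos hc4]
      obtain ⟨ha1, ha2, ha3, ha4⟩ := hc4
      have hI₂sub : insert (j₂-1) (I.erase j₂) ⊆ Finset.Icc (1:ℤ) (2*(n:ℤ)) := by
        intro x hx
        rcases Finset.mem_insert.1 hx with rfl | hx'
        · rw [Finset.mem_Icc]; omega
        · exact hIsub (Finset.mem_of_mem_erase hx')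
      have hI₂card : (insert (j₂-1) (I.erase j₂)).card = n := by
        rw [Finset.card_insert_of_notMem (fun h => ha4 (Finset.mem_of_mem_erase h)),
          Finset.card_erase_of_mem ha2, hIcard]
        omega
      have hrepl1 := Rset_replace hIsub ha4 ha2 (by rw [Finset.mem_Icc]; omega)
      have e1 : 2*(n:ℤ)+1-j₂ = j₁-1 := by omega
      have e2 : 2*(n:ℤ)+1-(j₂-1) = j₁ := by omega
      rw [e1, e2] at hrepl1
      have hj1I₂ : j₁ ∈ insert (j₂-1) (I.erase j₂) :=
        Finset.mem_insert.2 (Or.inr (Finset.mem_erase.2 ⟨by omega, ha1⟩))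
      have hi'I₂ : j₁-1 ∉ insert (j₂-1) (I.erase j₂) := by
        rw [Finset.mem_insert]
        rintro (h | h)
        · omega
        · exact ha3 (Finset.mem_of_mem_erase h)
      have hrepl2 := Rset_replace hI₂sub hi'I₂ hj1I₂ (by rw [Finset.mem_Icc]; omega)
      have f1 : 2*(n:ℤ)+1-j₁ = j₂-1 := by omega
      have f2 : 2*(n:ℤ)+1-(j₁-1) = j₂ := by omega
      rw [f1, f2, hrepl1] at hrepl2
      have hswap : insert (j₂-1) ((insert (j₁-1) ((Rset n I).erase j₁)).erase j₂)
          = insert (j₁-1) ((insert (j₂-1) ((Rset n I).erase j₂)).erase j₁) := by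
        ext x
        simp only [Finset.mem_insert, Finset.mem_erase]
        constructor
        · rintro (rfl | ⟨hx2, (rfl | ⟨hx1, hK⟩)⟩)
          · exact Or.inr ⟨by omega, Or.inl rfl⟩
          · exact Or.inl rfl
          · exact Or.inr ⟨hx1, Or.inr ⟨hx2, hK⟩⟩
        · rintro (rfl | ⟨hx1, (rfl | ⟨hx2, hK⟩)⟩)
          · exact Or.inr ⟨by omega, Or.inl rfl⟩
          · exact Or.inl rfl
          · exact Or.inr ⟨hx2, Or.inr ⟨hx1, hK⟩⟩
      rw [hswap] at hrepl2
      have hSIsub : insert (j₁-1) ((insert (j₂-1) (I.erase j₂)).erase j₁)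
          ⊆ Finset.Icc (1:ℤ) (2*(n:ℤ)) := by
        intro x hx
        rcases Finset.mem_insert.1 hx with rfl | hx'
        · rw [Finset.mem_Icc]; omega
        · exact hI₂sub (Finset.mem_of_mem_erase hx')
      have hSIcard : (insert (j₁-1) ((insert (j₂-1) (I.erase j₂)).erase j₁)).card = n := by
        rw [Finset.card_insert_of_notMem (fun h => hi'I₂ (Finset.mem_of_mem_erase h)),
          Finset.card_erase_of_mem hj1I₂, hI₂card]
        omega
      have hs := hsym _ hSIsub hSIcard
      rw [hrepl2] at hs
      rw [hs]
    · rw [if_neg (fun h => hc4 (hcond.1 h)), if_neg hc4]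
  rw [expand I hIsub hIcard, expand (Rset n I) hKsub hKcard, eq1, eq2, eq3,
    hsym I hIsub hIcard]
  ring
end

section
/- Let f be a bounded affine permutation of type (k,n) with no fixed points, i.e., f(i) ≠ i and f(i) ≠ i+n for all i ∈ ℤ. Then there exists i ∈ [n] such that f has a bridge at (i,i+1), i.e., i < f(i) < f(i+1) < i+n+1. -/
/-- A bounded affine permutation of type `(k,n)` with no fixed points
(`f(i) ≠ i` and `f(i) ≠ i+n` for all `i`) has a bridge at `(i,i+1)` for some `i ∈ [n]`. -/
theorem BAP_no_fixed_points_has_bridge (n k : ℕ) (f : ℤ → ℤ) (hf : IsBAP n k f)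
    (hnofix : ∀ i : ℤ, f i ≠ i ∧ f i ≠ i + (n : ℤ)) :
    ∃ i ∈ Finset.Icc (1 : ℤ) (n : ℤ),
      i < f i ∧ f i < f (i + 1) ∧ f (i + 1) < i + (n : ℤ) + 1 := by
  obtain ⟨hbij, hper, hbd, _⟩ := hf
  rcases Nat.eq_zero_or_pos n with hn | hn
  · exfalso
    have h := hbd 0
    have h2 := (hnofix 0).1
    subst hn
    simp at h
    omega
  by_contra hcon
  push_neg at hcon
  have key : ∀ i : ℤ, 1 ≤ i → i ≤ (n : ℤ) → f (i + 1) < f i := by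
    intro i h1 h2
    have hc := hcon i (Finset.mem_Icc.mpr ⟨h1, h2⟩)
    have hb := hbd i
    have hb1 := hbd (i + 1)
    have hn1 := (hnofix i).1
    have hn2 := (hnofix (i + 1)).2
    have hinj : f (i + 1) ≠ f i := fun h => by
      have := hbij.1 h; omega
    omega
  have desc : ∀ m : ℕ, (m : ℤ) ≤ (n : ℤ) → f (1 + m) ≤ f 1 - m := by
    intro m
    induction m with
    | zero => simp
    | succ m ih =>
      intro hm
      have h1 := key (1 + m) (by omega) (by push_cast at hm ⊢; omega)
      have h2 := ih (by push_cast at hm ⊢; omega)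
      have he : (1 : ℤ) + (m + 1 : ℕ) = (1 + (m : ℤ)) + 1 := by push_cast; ring
      rw [he]
      push_cast
      omega
  have hd := desc n le_rfl
  have hp := hper 1
  omega
end
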